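/- arXiv:2404.09568 — 3 statements merged into one kernel-verified Lean document; each statement's English description precedes it below -/
import Mathlib

section
/- Let (B_t)_{t≥0} be a standard one-dimensional Brownian motion and let Ṽ : ℝ → ℝ be continuous with Ṽ(x) ≤ Ã for all x. Let Ψ : ℝ → ℝ be measurable with ∫ Ψ(x)² dx = 1 and suppose that for some λ ∈ ℝ and all t > 0, x ∈ ℝ: Ψ(x) = e^{λ t} E[exp(∫₀^t Ṽ(x + B_s) ds) Ψ(x + B_t)]. Then λ + Ã > 0 and for every x ∈ ℝ: |Ψ(x)| ≤ (e/π)^{1/4} (λ + Ã)^{1/4}. -/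
open MeasureTheory ProbabilityTheory Real Filter

/-- Standard one-dimensional Brownian motion (started at 0): a.s. continuous paths,
independent increments, and Gaussian increments of variance `t - s`. -/
def IsBrownianMotion {Ω : Type} [MeasurableSpace Ω] (P : Measure Ω) (B : ℝ → Ω → ℝ) : Prop :=
  IsProbabilityMeasure P ∧
  (∀ t : ℝ, Measurable (B t)) ∧
  (∀ ω, B 0 ω = 0) ∧
  (∀ ω, Continuous fun t => B t ω) ∧
  (∀ s t : ℝ, 0 ≤ s → s ≤ t →
    Measure.map (fun ω => B t ω - B s ω) P = gaussianReal 0 (Real.toNNReal (t - s))) ∧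
  (∀ (n : ℕ) (t : Fin (n + 1) → ℝ), Monotone t → (∀ i, 0 ≤ t i) →
    iIndepFun (m := fun _ => Real.measurableSpace)
      (fun i : Fin n => fun ω => B (t i.succ) ω - B (t i.castSucc) ω) P)

/-- Proposition 3.4(ii), `eq:boundPsik`: an L²-normalized eigenfunction of the
Feynman–Kac semigroup with eigenvalue `e^{-λt}` satisfies `|Ψ(x)| ≤ (e/π)^{1/4}(λ+Ã)^{1/4}`. -/
theorem eigenfunction_uniform_bound
    {Ω : Type} [MeasurableSpace Ω] (P : Measure Ω) (B : ℝ → Ω → ℝ)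
    (hB : IsBrownianMotion P B)
    (Vt : ℝ → ℝ) (Atil : ℝ) (hVc : Continuous Vt) (hVb : ∀ x, Vt x ≤ Atil)
    (Ψ : ℝ → ℝ) (hΨm : Measurable Ψ) (hΨnorm : (∫ x : ℝ, (Ψ x) ^ 2) = 1)
    (lam : ℝ)
    (heigen : ∀ t : ℝ, 0 < t → ∀ x : ℝ,
      Ψ x = Real.exp (lam * t) *
        ∫ ω, Real.exp (∫ s in (0:ℝ)..t, Vt (x + B s ω)) * Ψ (x + B t ω) ∂P) :
    0 < lam + Atil ∧
      ∀ x : ℝ, |Ψ x| ≤ (Real.exp 1 / Real.pi) ^ ((1 : ℝ) / 4) * (lam + Atil) ^ ((1 : ℝ) / 4) := by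
  obtain ⟨hP, hBmeas, hB0, hBcont, hBinc, -⟩ := hB
  set a := lam + Atil with ha
  -- Ψ^2 is integrable (else its integral would be 0, not 1)
  have hΨ2int : Integrable (fun y => Ψ y ^ 2) := by
    by_contra h
    rw [integral_undef h] at hΨnorm
    exact zero_ne_one hΨnorm
  -- the key quantitative bound
  have key : ∀ t : ℝ, 0 < t → ∀ x : ℝ,
      |Ψ x| ≤ Real.exp (a * t) * (4 * π * t) ^ (-(1/4) : ℝ) := by
    intro t ht x
    set σ := Real.toNNReal t with hσdef
    have hσ : (σ : ℝ) = t := Real.coe_toNNReal t ht.le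
    have hσ0 : σ ≠ 0 := by
      simp only [hσdef, ne_eq, Real.toNNReal_eq_zero, not_le]
      exact ht
    have hmap : Measure.map (B t) P = gaussianReal 0 σ := by
      have h := hBinc 0 t le_rfl ht.le
      simpa [hB0, sub_zero] using h
    -- pointwise bound on the interval integral of the potential
    have hIb : ∀ ω, (∫ s in (0:ℝ)..t, Vt (x + B s ω)) ≤ Atil * t := by
      intro ω
      have hcont : Continuous fun s => Vt (x + B s ω) :=
        hVc.comp (continuous_const.add (hBcont ω))
      calc (∫ s in (0:ℝ)..t, Vt (x + B s ω)) ≤ ∫ s in (0:ℝ)..t, Atil :=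
            intervalIntegral.integral_mono_on ht.le (hcont.intervalIntegrable _ _)
              intervalIntegrable_const (fun s _ => hVb _)
        _ = Atil * t := by
            rw [intervalIntegral.integral_const, smul_eq_mul, sub_zero, mul_comm]
    -- reduce to a lintegral bound
    have hmono : (∫⁻ ω, ENNReal.ofReal
          ‖rexp (∫ s in (0:ℝ)..t, Vt (x + B s ω)) * Ψ (x + B t ω)‖ ∂P)
        ≤ ENNReal.ofReal (rexp (Atil * t)) * ∫⁻ ω, ENNReal.ofReal |Ψ (x + B t ω)| ∂P := by
      rw [← lintegral_const_mul' _ _ ENNReal.ofReal_ne_top]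
      refine lintegral_mono fun ω => ?_
      rw [← ENNReal.ofReal_mul (Real.exp_nonneg _)]
      apply ENNReal.ofReal_le_ofReal
      rw [Real.norm_eq_abs, abs_mul, Real.abs_exp]
      exact mul_le_mul_of_nonneg_right (Real.exp_le_exp.2 (hIb ω)) (abs_nonneg _)
    -- change of variables to the gaussian measure, then to Lebesgue with density
    have hmeasg : Measurable fun y : ℝ => ENNReal.ofReal |Ψ (x + y)| :=
      ((hΨm.comp (measurable_id.const_add x)).abs).ennreal_ofReal
    have hchange : (∫⁻ ω, ENNReal.ofReal |Ψ (x + B t ω)| ∂P)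
        = ∫⁻ y, gaussianPDF 0 σ y * ENNReal.ofReal |Ψ (x + y)| ∂volume := by
      rw [← lintegral_map hmeasg (hBmeas t), hmap, gaussianReal_of_var_ne_zero 0 hσ0,
        lintegral_withDensity_eq_lintegral_mul _ (measurable_gaussianPDF 0 σ) hmeasg]
      rfl
    -- Cauchy–Schwarz
    have hconj : Real.HolderConjugate 2 2 := Real.HolderConjugate.two_two
    have hholder := ENNReal.lintegral_mul_le_Lp_mul_Lq volume hconj
      (measurable_gaussianPDF 0 σ).aemeasurable hmeasg.aemeasurable
    -- the L² norm of the translated Ψ is 1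
    have hLg : (∫⁻ y, (ENNReal.ofReal |Ψ (x + y)|) ^ (2:ℝ) ∂volume) = 1 := by
      have h1 : ∀ y : ℝ, (ENNReal.ofReal |Ψ (x + y)|) ^ (2:ℝ)
          = ENNReal.ofReal (Ψ (x + y) ^ 2) := by
        intro y
        rw [ENNReal.ofReal_rpow_of_nonneg (abs_nonneg _) (by norm_num : (0:ℝ) ≤ 2),
          show (2:ℝ) = ((2:ℕ):ℝ) by norm_num, Real.rpow_natCast, sq_abs]
      simp_rw [h1]
      rw [lintegral_add_left_eq_self (fun z : ℝ => ENNReal.ofReal (Ψ z ^ 2)) x,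
        ← ofReal_integral_eq_lintegral_ofReal hΨ2int (ae_of_all _ fun y => sq_nonneg _),
        hΨnorm, ENNReal.ofReal_one]
    -- the L² norm squared of the gaussian density
    have hpdfsq : ∀ y : ℝ, (gaussianPDFReal 0 σ y) ^ 2
        = (2*π*t)⁻¹ * rexp (-(t⁻¹) * y^2) := by
      intro y
      rw [gaussianPDFReal, hσ, sub_zero, mul_pow, ← Real.sqrt_inv,
        Real.sq_sqrt (by positivity : (0:ℝ) ≤ (2*π*t)⁻¹), pow_two, ← Real.exp_add]
      congr 1
      field_simp
      ring
    have hIp2 : Integrable (fun y : ℝ => (gaussianPDFReal 0 σ y) ^ 2) := by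
      simp_rw [hpdfsq]
      exact (integrable_exp_neg_mul_sq (by positivity : (0:ℝ) < t⁻¹)).const_mul _
    have hintp : (∫ y : ℝ, (gaussianPDFReal 0 σ y) ^ 2) = (2*π*t)⁻¹ * √(π*t) := by
      simp_rw [hpdfsq]
      rw [integral_const_mul, integral_gaussian]
      congr 1
      field_simp
    have hLf : (∫⁻ y, (gaussianPDF 0 σ y) ^ (2:ℝ) ∂volume)
        = ENNReal.ofReal ((2*π*t)⁻¹ * √(π*t)) := by
      have h1 : ∀ y : ℝ, (gaussianPDF 0 σ y) ^ (2:ℝ)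
          = ENNReal.ofReal ((gaussianPDFReal 0 σ y) ^ 2) := by
        intro y
        rw [gaussianPDF, ENNReal.ofReal_rpow_of_nonneg (gaussianPDFReal_nonneg 0 σ y)
          (by norm_num : (0:ℝ) ≤ 2), show (2:ℝ) = ((2:ℕ):ℝ) by norm_num, Real.rpow_natCast]
      simp_rw [h1]
      rw [← ofReal_integral_eq_lintegral_ofReal hIp2 (ae_of_all _ fun y => sq_nonneg _), hintp]
    -- put the lintegral bound together
    have hIp_nonneg : (0:ℝ) ≤ (2*π*t)⁻¹ * √(π*t) := by positivity
    have htotal : (∫⁻ ω, ENNReal.ofReal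
          ‖rexp (∫ s in (0:ℝ)..t, Vt (x + B s ω)) * Ψ (x + B t ω)‖ ∂P)
        ≤ ENNReal.ofReal (rexp (Atil * t)) *
            ENNReal.ofReal (((2*π*t)⁻¹ * √(π*t)) ^ ((1:ℝ)/2)) := by
      refine hmono.trans ?_
      rw [hchange]
      refine mul_le_mul_right (hholder.trans ?_) _
      rw [hLf, hLg, ENNReal.one_rpow, mul_one,
        ENNReal.ofReal_rpow_of_nonneg hIp_nonneg (by norm_num : (0:ℝ) ≤ 1/2)]
    -- convert back to real integrals
    have hb1 : |Ψ x| ≤ rexp (lam * t) * (rexp (Atil * t) * ((2*π*t)⁻¹ * √(π*t)) ^ ((1:ℝ)/2)) := by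
      rw [heigen t ht x, abs_mul, Real.abs_exp]
      refine mul_le_mul_of_nonneg_left ?_ (Real.exp_nonneg _)
      calc |∫ ω, rexp (∫ s in (0:ℝ)..t, Vt (x + B s ω)) * Ψ (x + B t ω) ∂P|
          ≤ (∫⁻ ω, ENNReal.ofReal
              ‖rexp (∫ s in (0:ℝ)..t, Vt (x + B s ω)) * Ψ (x + B t ω)‖ ∂P).toReal := by
            rw [← Real.norm_eq_abs]
            exact norm_integral_le_lintegral_norm _
        _ ≤ (ENNReal.ofReal (rexp (Atil * t)) *
              ENNReal.ofReal (((2*π*t)⁻¹ * √(π*t)) ^ ((1:ℝ)/2))).toReal := by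
            refine ENNReal.toReal_mono ?_ htotal
            exact ENNReal.mul_ne_top ENNReal.ofReal_ne_top ENNReal.ofReal_ne_top
        _ = rexp (Atil * t) * ((2*π*t)⁻¹ * √(π*t)) ^ ((1:ℝ)/2) := by
            rw [ENNReal.toReal_mul, ENNReal.toReal_ofReal (Real.exp_nonneg _),
              ENNReal.toReal_ofReal (Real.rpow_nonneg hIp_nonneg _)]
    -- simplify the constant
    have hval : ((2*π*t)⁻¹ * √(π*t)) ^ ((1:ℝ)/2) = (4*π*t) ^ (-(1/4) : ℝ) := by
      have h1 : (2*π*t)⁻¹ * √(π*t) = (4*π*t) ^ (-(1/2) : ℝ) := by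
        rw [Real.rpow_neg (by positivity : (0:ℝ) ≤ 4*π*t), ← Real.sqrt_eq_rpow]
        rw [show (4:ℝ)*π*t = 2^2 * (π*t) by ring, Real.sqrt_mul (by positivity) (π*t),
          Real.sqrt_sq (by norm_num : (0:ℝ) ≤ 2)]
        have hs : (0:ℝ) < √(π*t) := Real.sqrt_pos.2 (by positivity)
        have h2 : (2:ℝ)*π*t = 2 * √(π*t) ^ 2 := by
          rw [Real.sq_sqrt (by positivity : (0:ℝ) ≤ π*t)]; ring
        rw [h2]
        field_simp
      rw [h1, ← Real.rpow_mul (by positivity : (0:ℝ) ≤ 4*π*t)]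
      norm_num
    rw [hval] at hb1
    calc |Ψ x| ≤ rexp (lam * t) * (rexp (Atil * t) * (4*π*t) ^ (-(1/4) : ℝ)) := hb1
      _ = Real.exp (a * t) * (4 * π * t) ^ (-(1/4) : ℝ) := by
        rw [← mul_assoc, ← Real.exp_add, ha]; ring_nf
  -- positivity of a
  have hapos : 0 < a := by
    by_contra h
    push_neg at h
    have hzero : ∀ x, Ψ x = 0 := by
      intro x
      have hb : ∀ᶠ t in atTop, |Ψ x| ≤ (4 * π * t) ^ (-(1/4) : ℝ) := by
        filter_upwards [eventually_gt_atTop (0:ℝ)] with t ht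
        have := key t ht x
        refine this.trans ?_
        have hexp : Real.exp (a * t) ≤ 1 := by
          rw [Real.exp_le_one_iff]
          exact mul_nonpos_of_nonpos_of_nonneg h ht.le
        nlinarith [Real.rpow_nonneg (by positivity : (0:ℝ) ≤ 4*π*t) (-(1/4) : ℝ)]
      have htend : Tendsto (fun t : ℝ => (4 * π * t) ^ (-(1/4) : ℝ)) atTop (nhds 0) := by
        have h1 : Tendsto (fun t : ℝ => 4 * π * t) atTop atTop :=
          Tendsto.const_mul_atTop (by positivity : (0:ℝ) < 4*π) tendsto_id
        exact (tendsto_rpow_neg_atTop (by norm_num : (0:ℝ) < 1/4)).comp h1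
      have hle : |Ψ x| ≤ 0 := ge_of_tendsto htend hb
      exact abs_nonpos_iff.1 hle
    simp only [hzero, ne_eq, OfNat.ofNat_ne_zero, not_false_eq_true, zero_pow,
      integral_zero] at hΨnorm
    exact zero_ne_one hΨnorm
  refine ⟨hapos, fun x => ?_⟩
  have ht0 : (0:ℝ) < 1 / (4*a) := by positivity
  have hb := key (1/(4*a)) ht0 x
  have ha' : a ≠ 0 := ne_of_gt hapos
  have he1 : a * (1/(4*a)) = 1/4 := by field_simp
  have he2 : 4 * π * (1/(4*a)) = π / a := by field_simp
  rw [he1, he2] at hb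
  refine hb.trans_eq ?_
  rw [Real.rpow_neg (by positivity : (0:ℝ) ≤ π/a), ← Real.inv_rpow (by positivity : (0:ℝ) ≤ π/a),
    inv_div, ← Real.exp_one_rpow (1/4 : ℝ),
    Real.div_rpow (le_of_lt (Real.exp_pos 1)) Real.pi_pos.le,
    Real.div_rpow hapos.le Real.pi_pos.le]
  field_simp
end

section
/- Let (B_t)_{t≥0} be a standard one-dimensional Brownian motion and Ṽ : ℝ → ℝ continuous with Ṽ(x) ≤ Ã for all x. Let (Ψ_k)_{k≥0} be an orthonormal basis of L²(ℝ, dx) consisting of continuous functions, and let (λ_k)_{k≥0} be a nondecreasing sequence of reals with ∑_{k≥0} e^{−λ_k t} < ∞ for every t > 0, such that for every k, t > 0 and x: E[exp(∫₀^t Ṽ(x + B_s) ds) Ψ_k(x + B_t)] = e^{−λ_k t} Ψ_k(x). Then: (i) for all t > 0 and x, y ∈ ℝ, ∑_{k≥0} e^{−λ_k t} |Ψ_k(x)| |Ψ_k(y)| ≤ e^{Ã t} / √(2π t); (ii) the function p̃(t, x, y) := ∑_{k≥0} e^{−λ_k t} Ψ_k(x) Ψ_k(y) is a transition density: for every φ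 ∈ L²(ℝ, dx), every t > 0 and x, E[exp(∫₀^t Ṽ(x + B_s) ds) φ(x + B_t)] = ∫ p̃(t, x, y) φ(y) dy; (iii) p̃ is continuous on (0, ∞) × ℝ². -/
open MeasureTheory ProbabilityTheory Real Filter Topology
open scoped NNReal ENNReal

section Auxiliary

lemma sq_gaussianPDFReal (x : ℝ) (v : ℝ≥0) (y : ℝ) :
    (gaussianPDFReal x v y)^2 = (2 * Real.sqrt (π * v))⁻¹ * gaussianPDFReal x (v/2) y := by
  have hπv : (0:ℝ) ≤ π * v := by positivity
  simp only [gaussianPDFReal, mul_pow, NNReal.coe_div, NNReal.coe_ofNat]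
  rw [← Real.exp_nat_mul]
  have h1 : ((√(2 * π * v))⁻¹)^2 = (2 * (π * v))⁻¹ := by
    rw [← Real.sqrt_inv, Real.sq_sqrt (by positivity), mul_assoc]
  have h2 : (2:ℕ) * (-(y - x) ^ 2 / (2 * ↑v)) = -(y - x) ^ 2 / ((2:ℝ) * (↑v / 2)) := by
    rcases eq_or_ne (v:ℝ) 0 with hv | hv
    · simp [hv]
    · field_simp; ring
  have h3 : √(2 * π * (↑v / 2)) = Real.sqrt (π * v) := by
    congr 1; ring
  rw [h1, h2, h3]
  have h4 : (2 * Real.sqrt (π * ↑v))⁻¹ * (Real.sqrt (π * ↑v))⁻¹ = (2 * (π * ↑v))⁻¹ := by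
    rw [mul_inv, mul_assoc, ← mul_inv (Real.sqrt (π*↑v)), Real.mul_self_sqrt hπv, ← mul_inv]
  rw [← h4]
  ring

lemma integral_sq_gaussianPDFReal (x : ℝ) {v : ℝ≥0} (hv : v ≠ 0) :
    ∫ y, (gaussianPDFReal x v y)^2 = (2 * Real.sqrt (π * v))⁻¹ := by
  simp_rw [sq_gaussianPDFReal]
  rw [integral_const_mul, integral_gaussianPDFReal_eq_one x (by simpa using hv), mul_one]

lemma integrable_sq_gaussianPDFReal (x : ℝ) (v : ℝ≥0) :
    Integrable (fun y => (gaussianPDFReal x v y)^2) := by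
  simp_rw [sq_gaussianPDFReal]
  exact (integrable_gaussianPDFReal x (v/2)).const_mul _

lemma memℒp_gaussianPDFReal (x : ℝ) (v : ℝ≥0) : MemLp (gaussianPDFReal x v) 2 volume :=
  (memLp_two_iff_integrable_sq (stronglyMeasurable_gaussianPDFReal x v).aestronglyMeasurable).2
    (integrable_sq_gaussianPDFReal x v)

lemma aux_abs_le {e a b M : ℝ} (he : 0 ≤ e) (hM : 0 ≤ M) (hx : e * a^2 ≤ M) (hy : e * b^2 ≤ M) :
    e * |a| * |b| ≤ M := by
  have h1 : e * |a| * |b| = Real.sqrt (e*a^2) * Real.sqrt (e*b^2) := by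
    rw [Real.sqrt_mul he, Real.sqrt_mul he, Real.sqrt_sq_eq_abs, Real.sqrt_sq_eq_abs,
      show Real.sqrt e * |a| * (Real.sqrt e * |b|) = Real.sqrt e * Real.sqrt e * |a| * |b| by ring,
      Real.mul_self_sqrt he]
  rw [h1]
  calc Real.sqrt (e*a^2) * Real.sqrt (e*b^2) ≤ Real.sqrt M * Real.sqrt M :=
        mul_le_mul (Real.sqrt_le_sqrt hx) (Real.sqrt_le_sqrt hy) (Real.sqrt_nonneg _)
          (Real.sqrt_nonneg _)
    _ = M := Real.mul_self_sqrt hM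


lemma half_bound (Atil t : ℝ) (ht : 0 < t) :
    (Real.exp (Atil * (t/2)))^2 * (2 * Real.sqrt (π * (t/2)))⁻¹ =
      Real.exp (Atil * t) / Real.sqrt (2 * π * t) := by
  have h1 : (Real.exp (Atil * (t/2)))^2 = Real.exp (Atil * t) := by
    rw [sq, ← Real.exp_add]
    ring_nf
  have h2 : Real.sqrt (2 * π * t) = 2 * Real.sqrt (π * (t/2)) := by
    rw [show 2*π*t = 2^2*(π*(t/2)) by ring, Real.sqrt_mul (by positivity), Real.sqrt_sq (by norm_num)]
  rw [h1, h2, ← div_eq_mul_inv]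


lemma measurable_FK {Ω : Type} [MeasurableSpace Ω] (B : ℝ → Ω → ℝ)
    (hBm : ∀ t : ℝ, Measurable (B t)) (hBc : ∀ ω, Continuous fun t => B t ω)
    (Vt : ℝ → ℝ) (hVc : Continuous Vt) (t x : ℝ) (ht : 0 ≤ t) :
    Measurable fun ω => ∫ s in (0:ℝ)..t, Vt (x + B s ω) := by
  have hu : Measurable (Function.uncurry fun s (ω : Ω) => Vt (x + B s ω)) :=
    measurable_uncurry_of_continuous_of_measurable
      (fun ω => hVc.comp (continuous_const.add (hBc ω)))
      (fun s => hVc.measurable.comp ((hBm s).const_add x))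
  have hswap : StronglyMeasurable (Function.uncurry fun (ω : Ω) s => Vt (x + B s ω)) := by
    have : (Function.uncurry fun (ω : Ω) s => Vt (x + B s ω)) =
        (Function.uncurry fun s (ω : Ω) => Vt (x + B s ω)) ∘ Prod.swap := rfl
    rw [this]
    exact (hu.comp measurable_swap).stronglyMeasurable
  have h2 : StronglyMeasurable fun ω =>
      ∫ s, Vt (x + B s ω) ∂(volume.restrict (Set.Ioc (0:ℝ) t)) :=
    hswap.integral_prod_right
  have h3 : (fun ω => ∫ s in (0:ℝ)..t, Vt (x + B s ω)) =
      fun ω => ∫ s, Vt (x + B s ω) ∂(volume.restrict (Set.Ioc (0:ℝ) t)) := by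
    funext ω
    rw [intervalIntegral.integral_of_le ht]
  rw [h3]
  exact h2.measurable

lemma exists_density {Ω : Type} [MeasurableSpace Ω] (P : Measure Ω) (B : ℝ → Ω → ℝ)
    (hP : IsProbabilityMeasure P)
    (hBm : ∀ t : ℝ, Measurable (B t)) (hB0 : ∀ ω, B 0 ω = 0)
    (hBc : ∀ ω, Continuous fun t => B t ω)
    (hBinc : ∀ s t : ℝ, 0 ≤ s → s ≤ t →
      Measure.map (fun ω => B t ω - B s ω) P = gaussianReal 0 (Real.toNNReal (t - s)))
    (Vt : ℝ → ℝ) (Atil : ℝ) (hVc : Continuous Vt) (hVb : ∀ x, Vt x ≤ Atil)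
    (t : ℝ) (ht : 0 < t) (x : ℝ) :
    ∃ h : ℝ → ℝ, Measurable h ∧ (∀ y, 0 ≤ h y) ∧ MemLp h 2 volume ∧
      (∫ y, (h y)^2) ≤ (Real.exp (Atil * t))^2 * (2 * Real.sqrt (π * t))⁻¹ ∧
      (∀ φ : ℝ → ℝ, AEStronglyMeasurable φ volume →
        (∫ ω, Real.exp (∫ s in (0:ℝ)..t, Vt (x + B s ω)) * φ (x + B t ω) ∂P) =
          ∫ y, h y * φ y) := by
  haveI := hP
  set T : Ω → ℝ := fun ω => x + B t ω with hTdef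
  have hTm : Measurable T := (hBm t).const_add x
  set Fr : Ω → ℝ := fun ω => Real.exp (∫ s in (0:ℝ)..t, Vt (x + B s ω)) with hFrdef
  have hFrm : Measurable Fr := (measurable_FK B hBm hBc Vt hVc t x ht.le).exp
  have hFr0 : ∀ ω, 0 ≤ Fr ω := fun ω => (Real.exp_pos _).le
  have hFrle : ∀ ω, Fr ω ≤ Real.exp (Atil * t) := by
    intro ω
    apply Real.exp_le_exp.2
    calc ∫ s in (0:ℝ)..t, Vt (x + B s ω) ≤ ∫ _ in (0:ℝ)..t, Atil := by
          apply intervalIntegral.integral_mono_on ht.le ?_ (intervalIntegrable_const)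
            (fun s _ => hVb _)
          exact (hVc.comp (continuous_const.add (hBc ω))).intervalIntegrable 0 t
      _ = Atil * t := by simp [mul_comm]
  set v : ℝ≥0 := Real.toNNReal t with hvdef
  have hv : v ≠ 0 := by
    simp only [hvdef, ne_eq, Real.toNNReal_eq_zero, not_le]
    exact ht
  have hvt : (v : ℝ) = t := Real.coe_toNNReal t ht.le
  have hmapT : Measure.map T P = gaussianReal x v := by
    have h1 : Measure.map (fun ω => B t ω) P = gaussianReal 0 v := by
      have h0 := hBinc 0 t le_rfl ht.le
      have : (fun ω => B t ω - B 0 ω) = fun ω => B t ω := by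
        funext ω; rw [hB0 ω, sub_zero]
      rw [this] at h0
      simpa using h0
    have h2 : T = (· + x) ∘ fun ω => B t ω := by
      funext ω; simp [hTdef, add_comm]
    rw [h2, ← Measure.map_map (measurable_add_const x) (hBm t), h1,
      gaussianReal_map_add_const, zero_add]
  set C : ℝ≥0∞ := ENNReal.ofReal (Real.exp (Atil * t)) with hCdef
  have hCne : C ≠ ∞ := ENNReal.ofReal_ne_top
  set Fe : Ω → ℝ≥0∞ := fun ω => ENNReal.ofReal (Fr ω) with hFedef
  have hFem : Measurable Fe := hFrm.ennreal_ofReal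
  have hFeleC : ∀ ω, Fe ω ≤ C := fun ω => ENNReal.ofReal_le_ofReal (hFrle ω)
  set μ1 : Measure Ω := P.withDensity Fe with hμ1def
  set ν : Measure ℝ := μ1.map T with hνdef
  haveI hμ1fin : IsFiniteMeasure μ1 := by
    apply isFiniteMeasure_withDensity (μ := P) (f := Fe)
    apply LT.lt.ne
    calc ∫⁻ ω, Fe ω ∂P ≤ ∫⁻ _, C ∂P := lintegral_mono hFeleC
      _ = C := by simp
      _ < ∞ := hCne.lt_top
  haveI hνfin : IsFiniteMeasure ν := Measure.isFiniteMeasure_map μ1 T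
  have hνle : ν ≤ (volume : Measure ℝ).withDensity (fun y => C * gaussianPDF x v y) := by
    rw [Measure.le_iff]
    intro s hs
    rw [hνdef, Measure.map_apply hTm hs, hμ1def, withDensity_apply _ (hTm hs),
      withDensity_apply _ hs]
    calc ∫⁻ ω in T ⁻¹' s, Fe ω ∂P ≤ ∫⁻ _ in T ⁻¹' s, C ∂P :=
          setLIntegral_mono measurable_const (fun ω _ => hFeleC ω)
      _ = C * P (T ⁻¹' s) := setLIntegral_const _ _
      _ = C * (Measure.map T P) s := by rw [Measure.map_apply hTm hs]
      _ = C * gaussianReal x v s := by rw [hmapT]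
      _ = C * ∫⁻ y in s, gaussianPDF x v y := by rw [gaussianReal_apply x hv s]
      _ = ∫⁻ y in s, C * gaussianPDF x v y := by
          rw [lintegral_const_mul C ((measurable_gaussianPDF x v))]
  have hνac : ν ≪ (volume : Measure ℝ) :=
    (Measure.absolutelyContinuous_of_le hνle).trans (withDensity_absolutelyContinuous _ _)
  set hE : ℝ → ℝ≥0∞ := ν.rnDeriv volume with hEdef
  have hEm : Measurable hE := Measure.measurable_rnDeriv ν volume
  have hwd : (volume : Measure ℝ).withDensity hE = ν :=
    Measure.withDensity_rnDeriv_eq ν volume hνac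
  have hElt : ∀ᵐ y : ℝ, hE y < ∞ := Measure.rnDeriv_lt_top ν volume
  have hEle : ∀ᵐ y : ℝ, hE y ≤ C * gaussianPDF x v y := by
    apply ae_le_of_forall_setLIntegral_le_of_sigmaFinite hEm
    intro s hs _
    calc ∫⁻ y in s, hE y = (volume.withDensity hE) s := (withDensity_apply _ hs).symm
      _ = ν s := by rw [hwd]
      _ ≤ (volume.withDensity fun y => C * gaussianPDF x v y) s := Measure.le_iff'.1 hνle s
      _ = ∫⁻ y in s, C * gaussianPDF x v y := withDensity_apply _ hs
  set h : ℝ → ℝ := fun y => (hE y).toReal with hhdef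
  have hhm : Measurable h := hEm.ennreal_toReal
  have hh0 : ∀ y, 0 ≤ h y := fun y => ENNReal.toReal_nonneg
  set g : ℝ → ℝ := fun y => Real.exp (Atil * t) * gaussianPDFReal x v y with hgdef
  have hg0 : ∀ y, 0 ≤ g y := fun y =>
    mul_nonneg (Real.exp_pos _).le (gaussianPDFReal_nonneg x v y)
  have hhle : ∀ᵐ y : ℝ, h y ≤ g y := by
    filter_upwards [hEle] with y hy
    calc h y ≤ (C * gaussianPDF x v y).toReal := by
          apply ENNReal.toReal_mono _ hy
          exact ENNReal.mul_ne_top hCne ENNReal.ofReal_ne_top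
      _ = g y := by
          rw [ENNReal.toReal_mul, hCdef, ENNReal.toReal_ofReal (Real.exp_pos _).le,
            gaussianPDF, ENNReal.toReal_ofReal (gaussianPDFReal_nonneg x v y)]
  have hgmem : MemLp g 2 (volume : Measure ℝ) := (memℒp_gaussianPDFReal x v).const_mul _
  have hhmem : MemLp h 2 (volume : Measure ℝ) := by
    apply hgmem.of_le hhm.aestronglyMeasurable
    filter_upwards [hhle] with y hy
    rw [Real.norm_of_nonneg (hh0 y), Real.norm_of_nonneg (hg0 y)]
    exact hy
  have hsqint : Integrable (fun y => (h y)^2) :=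
    (memLp_two_iff_integrable_sq hhm.aestronglyMeasurable).1 hhmem
  have hsq : (∫ y, (h y)^2) ≤ (Real.exp (Atil * t))^2 * (2 * Real.sqrt (π * t))⁻¹ := by
    have hgint : Integrable (fun y => (g y)^2) := by
      simp only [hgdef, mul_pow]
      exact (integrable_sq_gaussianPDFReal x v).const_mul _
    calc (∫ y, (h y)^2) ≤ ∫ y, (g y)^2 := by
          apply integral_mono_ae hsqint hgint
          filter_upwards [hhle] with y hy
          exact pow_le_pow_left₀ (hh0 y) hy 2
      _ = (Real.exp (Atil * t))^2 * ∫ y, (gaussianPDFReal x v y)^2 := by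
          simp only [hgdef, mul_pow]
          rw [integral_const_mul]
      _ = (Real.exp (Atil * t))^2 * (2 * Real.sqrt (π * t))⁻¹ := by
          rw [integral_sq_gaussianPDFReal x hv, hvt]
  refine ⟨h, hhm, hh0, hhmem, hsq, ?_⟩
  intro φ hφ
  have hφν : AEStronglyMeasurable φ ν := hφ.mono_ac hνac
  have h1 : ∫ y, φ y ∂ν = ∫ ω, φ (T ω) ∂μ1 := integral_map hTm.aemeasurable hφν
  have h2 : ∫ ω, φ (T ω) ∂μ1 = ∫ ω, Fr ω * φ (T ω) ∂P := by
    have hFe' : Fe = fun ω => (((Fr ω).toNNReal : ℝ≥0) : ℝ≥0∞) := rfl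
    rw [hμ1def, hFe', integral_withDensity_eq_integral_smul hFrm.real_toNNReal]
    congr 1
    funext ω
    rw [NNReal.smul_def, smul_eq_mul, Real.coe_toNNReal _ (hFr0 ω)]
  have h3 : ∫ y, φ y ∂ν = ∫ y, h y * φ y := by
    have hEtn : (volume : Measure ℝ).withDensity hE =
        volume.withDensity (fun y => ((hE y).toNNReal : ℝ≥0∞)) :=
      withDensity_congr_ae (hElt.mono fun y hy => (ENNReal.coe_toNNReal hy.ne).symm)
    rw [← hwd, hEtn, integral_withDensity_eq_integral_smul hEm.ennreal_toNNReal]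
    rfl
  rw [← h2, ← h1, h3]


variable (Ψ : ℕ → ℝ → ℝ)

lemma L2inner_eq (f g : ℝ → ℝ) (hf : MemLp f 2 (volume : Measure ℝ))
    (hg : MemLp g 2 (volume : Measure ℝ)) :
    @inner ℝ _ _ (hf.toLp f) (hg.toLp g) = ∫ x, f x * g x := by
  rw [MeasureTheory.L2.inner_def]
  apply integral_congr_ae
  filter_upwards [hf.coeFn_toLp, hg.coeFn_toLp] with x hx hy
  rw [hx, hy]
  simp [RCLike.inner_apply, starRingEnd_apply, mul_comm]

lemma memL2_of_orth (hΨc : ∀ k, Continuous (Ψ k))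
    (horth : ∀ j k : ℕ, (∫ x : ℝ, Ψ j x * Ψ k x) = if j = k then 1 else 0) (k : ℕ) :
    MemLp (Ψ k) 2 (volume : Measure ℝ) := by
  rw [memLp_two_iff_integrable_sq (hΨc k).aestronglyMeasurable]
  by_contra hni
  have := horth k k
  simp only [if_pos rfl] at this
  rw [show (fun x => Ψ k x * Ψ k x) = fun x => (Ψ k x)^2 by funext x; ring] at this
  rw [integral_undef hni] at this
  norm_num at this

lemma bessel_general (hΨc : ∀ k, Continuous (Ψ k))
    (horth : ∀ j k : ℕ, (∫ x : ℝ, Ψ j x * Ψ k x) = if j = k then 1 else 0)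
    (f : ℝ → ℝ) (hf : MemLp f 2 (volume : Measure ℝ)) :
    Summable (fun k => (∫ x, f x * Ψ k x)^2) ∧
      (∑' k, (∫ x, f x * Ψ k x)^2) ≤ ∫ x, (f x)^2 := by
  classical
  set e : ℕ → Lp ℝ 2 (volume : Measure ℝ) :=
    fun k => (memL2_of_orth Ψ hΨc horth k).toLp (Ψ k) with he
  have hON : Orthonormal ℝ e := by
    rw [orthonormal_iff_ite]
    intro j k
    rw [L2inner_eq, horth j k]
  set G : Lp ℝ 2 (volume : Measure ℝ) := hf.toLp f with hG
  have hinner : ∀ k, @inner ℝ _ _ (e k) G = ∫ x, f x * Ψ k x := by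
    intro k
    rw [he, hG, L2inner_eq]
    simp_rw [mul_comm]
  have hnormsq : (‖G‖ : ℝ)^2 = ∫ x, (f x)^2 := by
    rw [← real_inner_self_eq_norm_sq, hG, L2inner_eq]
    simp_rw [← sq]
  constructor
  · have := hON.inner_products_summable (x := G)
    simp_rw [hinner, Real.norm_eq_abs, sq_abs] at this
    exact this
  · have := hON.tsum_inner_products_le (x := G)
    simp_rw [hinner, Real.norm_eq_abs, sq_abs] at this
    rw [hnormsq] at this
    exact this

lemma hilbert_expansion (hΨc : ∀ k, Continuous (Ψ k))
    (horth : ∀ j k : ℕ, (∫ x : ℝ, Ψ j x * Ψ k x) = if j = k then 1 else 0)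
    (hcomplete : ∀ f : ℝ → ℝ, MemLp f 2 volume →
      (∀ k, (∫ x : ℝ, f x * Ψ k x) = 0) → f =ᵐ[volume] 0)
    (f : ℝ → ℝ) (hf : MemLp f 2 (volume : Measure ℝ)) (c : ℕ → ℝ)
    (hc : ∀ k, (∫ x, f x * Ψ k x) = c k) :
    HasSum (fun k => c k • (memL2_of_orth Ψ hΨc horth k).toLp (Ψ k)) (hf.toLp f) := by
  classical
  set e : ℕ → Lp ℝ 2 (volume : Measure ℝ) :=
    fun k => (memL2_of_orth Ψ hΨc horth k).toLp (Ψ k) with he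
  have hON : Orthonormal ℝ e := by
    rw [orthonormal_iff_ite]
    intro j k
    rw [L2inner_eq, horth j k]
  have hbot : (Submodule.span ℝ (Set.range e))ᗮ = ⊥ := by
    rw [Submodule.eq_bot_iff]
    intro g hg
    have hinner0 : ∀ k, @inner ℝ _ _ (e k) g = 0 := fun k =>
      hg (e k) (Submodule.subset_span ⟨k, rfl⟩)
    have hint0 : ∀ k, (∫ x, (g : ℝ → ℝ) x * Ψ k x) = 0 := by
      intro k
      have h1 : @inner ℝ _ _ ((Lp.memLp g).toLp (g : ℝ → ℝ))
          ((memL2_of_orth Ψ hΨc horth k).toLp (Ψ k)) = ∫ x, (g : ℝ → ℝ) x * Ψ k x :=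
        L2inner_eq _ _ _ _
      rw [MeasureTheory.Lp.toLp_coeFn g (Lp.memLp g)] at h1
      rw [← h1, real_inner_comm, hinner0 k]
    have := hcomplete (g : ℝ → ℝ) (Lp.memLp g) hint0
    exact Lp.eq_zero_iff_ae_eq_zero.2 this
  set b : HilbertBasis ℕ ℝ (Lp ℝ 2 (volume : Measure ℝ)) :=
    HilbertBasis.mkOfOrthogonalEqBot hON hbot with hb
  have hbe : ⇑b = e := HilbertBasis.coe_mkOfOrthogonalEqBot hON hbot
  have hrepr : ∀ k, b.repr (hf.toLp f) k = c k := by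
    intro k
    rw [HilbertBasis.repr_apply_apply, hbe]
    rw [real_inner_comm, L2inner_eq, hc k]
  have hhs := b.hasSum_repr (hf.toLp f)
  have h2 : (fun k => b.repr (hf.toLp f) k • b k) = fun k => c k • e k := by
    funext k
    rw [hrepr k, hbe]
  rw [h2] at hhs
  exact hhs

lemma tsum_ae_eq (hΨc : ∀ k, Continuous (Ψ k))
    (horth : ∀ j k : ℕ, (∫ x : ℝ, Ψ j x * Ψ k x) = if j = k then 1 else 0)
    (f : ℝ → ℝ) (hf : MemLp f 2 (volume : Measure ℝ)) (c : ℕ → ℝ)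
    (hHS : HasSum (fun k => c k • (memL2_of_orth Ψ hΨc horth k).toLp (Ψ k)) (hf.toLp f))
    (hpt : ∀ y : ℝ, Summable (fun k => c k * Ψ k y)) :
    (fun y => ∑' k, c k * Ψ k y) =ᵐ[volume] f := by
  classical
  set e : ℕ → Lp ℝ 2 (volume : Measure ℝ) :=
    fun k => (memL2_of_orth Ψ hΨc horth k).toLp (Ψ k) with he
  set G : Lp ℝ 2 (volume : Measure ℝ) := hf.toLp f with hG
  set S : ℕ → Lp ℝ 2 (volume : Measure ℝ) :=
    fun n => ∑ k ∈ Finset.range n, c k • e k with hS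
  have htend : Tendsto S atTop (𝓝 G) := hHS.tendsto_sum_nat
  have haux : ∀ n, ⇑(S n) =ᵐ[volume] fun y => ∑ k ∈ Finset.range n, c k * Ψ k y := by
    intro n
    induction n with
    | zero =>
      simp only [hS, Finset.range_zero, Finset.sum_empty]
      exact Lp.coeFn_zero _ _ _
    | succ n ih =>
      have h1 : S (n + 1) = S n + c n • e n := by
        rw [hS]
        simp only
        rw [Finset.sum_range_succ]
      rw [h1]
      filter_upwards [Lp.coeFn_add (S n) (c n • e n), Lp.coeFn_smul (c n) (e n), ih,
        (memL2_of_orth Ψ hΨc horth n).coeFn_toLp] with y hy1 hy2 hy3 hy4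
      rw [hy1]
      simp only [Pi.add_apply]
      rw [hy3, hy2]
      simp only [Pi.smul_apply, smul_eq_mul]
      simp only [he]
      rw [hy4, Finset.sum_range_succ]
  have hms : Tendsto (fun n => eLpNorm (⇑(S n) - ⇑G) 2 volume) atTop (𝓝 0) :=
    (Lp.tendsto_Lp_iff_tendsto_eLpNorm' S G).1 htend
  have him : TendstoInMeasure volume (fun n => ⇑(S n)) atTop ⇑G :=
    tendstoInMeasure_of_tendsto_eLpNorm (by norm_num)
      (fun n => Lp.aestronglyMeasurable (S n)) (Lp.aestronglyMeasurable G) hms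
  obtain ⟨ns, hns, hae⟩ := him.exists_seq_tendsto_ae
  have hGf : ⇑G =ᵐ[volume] f := hf.coeFn_toLp
  have hallaux : ∀ᵐ y : ℝ, ∀ n, (S n : ℝ → ℝ) y = ∑ k ∈ Finset.range n, c k * Ψ k y :=
    ae_all_iff.2 haux
  filter_upwards [hae, hGf, hallaux] with y h1 h2 h3
  have h5 : Tendsto (fun i => ∑ k ∈ Finset.range (ns i), c k * Ψ k y) atTop
      (𝓝 (∑' k, c k * Ψ k y)) :=
    ((hpt y).hasSum.tendsto_sum_nat).comp hns.tendsto_atTop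
  have h6 : Tendsto (fun i => ∑ k ∈ Finset.range (ns i), c k * Ψ k y) atTop (𝓝 (f y)) := by
    rw [h2] at h1
    exact h1.congr fun i => h3 (ns i)
  exact tendsto_nhds_unique h5 h6

end Auxiliary

/-- Proposition 3.4(iii)-(iv): the eigenfunction expansion
`p̃(t,x,y) = ∑ e^{-λ_k t}Ψ_k(x)Ψ_k(y)` converges absolutely with bound `e^{Ãt}/√(2πt)`, is a
transition density for the Feynman–Kac semigroup, and is continuous on `(0,∞) × ℝ²`. -/
theorem transition_density_expansion
    {Ω : Type} [MeasurableSpace Ω] (P : Measure Ω) (B : ℝ → Ω → ℝ)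
    (hB : IsBrownianMotion P B)
    (Vt : ℝ → ℝ) (Atil : ℝ) (hVc : Continuous Vt) (hVb : ∀ x, Vt x ≤ Atil)
    (Ψ : ℕ → ℝ → ℝ) (hΨc : ∀ k, Continuous (Ψ k))
    -- (Ψ_k) is orthonormal in L²(ℝ, dx) ...
    (horth : ∀ j k : ℕ, (∫ x : ℝ, Ψ j x * Ψ k x) = if j = k then 1 else 0)
    -- ... and complete (an orthonormal basis):
    (hcomplete : ∀ f : ℝ → ℝ, MemLp f 2 volume →
      (∀ k, (∫ x : ℝ, f x * Ψ k x) = 0) → f =ᵐ[volume] 0)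
    (lam : ℕ → ℝ) (hmono : Monotone lam)
    (hsumm : ∀ t : ℝ, 0 < t → Summable fun k => Real.exp (-(lam k * t)))
    (heigen : ∀ (k : ℕ) (t : ℝ), 0 < t → ∀ x : ℝ,
      (∫ ω, Real.exp (∫ s in (0:ℝ)..t, Vt (x + B s ω)) * Ψ k (x + B t ω) ∂P) =
        Real.exp (-(lam k * t)) * Ψ k x) :
    -- (i) absolute convergence with the Gaussian bound
    (∀ (t : ℝ), 0 < t → ∀ x y : ℝ,
      Summable (fun k => Real.exp (-(lam k * t)) * |Ψ k x| * |Ψ k y|) ∧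
      (∑' k, Real.exp (-(lam k * t)) * |Ψ k x| * |Ψ k y|) ≤
        Real.exp (Atil * t) / Real.sqrt (2 * Real.pi * t)) ∧
    -- (ii) p̃ is a transition density for the semigroup
    (∀ φ : ℝ → ℝ, MemLp φ 2 volume → ∀ (t : ℝ), 0 < t → ∀ x : ℝ,
      (∫ ω, Real.exp (∫ s in (0:ℝ)..t, Vt (x + B s ω)) * φ (x + B t ω) ∂P) =
        ∫ y, (∑' k, Real.exp (-(lam k * t)) * Ψ k x * Ψ k y) * φ y) ∧
    -- (iii) p̃ is continuous on (0,∞) × ℝ²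
    ContinuousOn
      (fun q : ℝ × ℝ × ℝ => ∑' k, Real.exp (-(lam k * q.1)) * Ψ k q.2.1 * Ψ k q.2.2)
      {q : ℝ × ℝ × ℝ | 0 < q.1} := by
  obtain ⟨hP, hBm, hB0, hBc, hBinc, -⟩ := hB
  have hdiag : ∀ t : ℝ, 0 < t → ∀ x : ℝ,
      Summable (fun k => Real.exp (-(lam k * t)) * (Ψ k x)^2) ∧
        (∑' k, Real.exp (-(lam k * t)) * (Ψ k x)^2) ≤
          Real.exp (Atil*t) / Real.sqrt (2*π*t) := by
    intro t ht x
    obtain ⟨h, hm, h0, hmem, hsq, hid⟩ :=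
      exists_density P B hP hBm hB0 hBc hBinc Vt Atil hVc hVb (t/2) (half_pos ht) x
    have hcoef : ∀ k, (∫ y, h y * Ψ k y) = Real.exp (-(lam k * (t/2))) * Ψ k x := fun k =>
      ((hid (Ψ k) (hΨc k).aestronglyMeasurable).symm.trans (heigen k (t/2) (half_pos ht) x))
    obtain ⟨hsum2, hle2⟩ := bessel_general Ψ hΨc horth h hmem
    have hterm : (fun k => (∫ y, h y * Ψ k y)^2) =
        fun k => Real.exp (-(lam k * t)) * (Ψ k x)^2 := by
      funext k
      rw [hcoef k, mul_pow, sq (Real.exp _), ← Real.exp_add]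
      have he : -(lam k*(t/2)) + -(lam k*(t/2)) = -(lam k*t) := by ring
      rw [he]
    rw [hterm] at hsum2 hle2
    exact ⟨hsum2, hle2.trans (hsq.trans_eq (half_bound Atil t ht))⟩
  have parti : ∀ t : ℝ, 0 < t → ∀ x y : ℝ,
      Summable (fun k => Real.exp (-(lam k * t)) * |Ψ k x| * |Ψ k y|) ∧
      (∑' k, Real.exp (-(lam k * t)) * |Ψ k x| * |Ψ k y|) ≤
        Real.exp (Atil * t) / Real.sqrt (2 * π * t) := by
    intro t ht x y
    obtain ⟨hsx, hbx⟩ := hdiag t ht x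
    obtain ⟨hsy, hby⟩ := hdiag t ht y
    set u : ℕ → ℝ := fun k => Real.exp (-(lam k * t)) * (Ψ k x)^2 with hu
    set w : ℕ → ℝ := fun k => Real.exp (-(lam k * t)) * (Ψ k y)^2 with hw
    set a : ℕ → ℝ := fun k => Real.exp (-(lam k * t)) * |Ψ k x| * |Ψ k y| with ha
    have hu0 : ∀ k, 0 ≤ u k := fun k => by positivity
    have hw0 : ∀ k, 0 ≤ w k := fun k => by positivity
    have ha0 : ∀ k, 0 ≤ a k := fun k =>
      mul_nonneg (mul_nonneg (Real.exp_pos _).le (abs_nonneg _)) (abs_nonneg _)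
    have haupw : ∀ k, a k ≤ (u k + w k)/2 := by
      intro k
      have h2 : 2 * (|Ψ k x| * |Ψ k y|) ≤ (Ψ k x)^2 + (Ψ k y)^2 := by
        nlinarith [sq_nonneg (|Ψ k x| - |Ψ k y|), sq_abs (Ψ k x), sq_abs (Ψ k y)]
      have he : (0:ℝ) < Real.exp (-(lam k * t)) := Real.exp_pos _
      have := mul_le_mul_of_nonneg_left h2 he.le
      simp only [ha, hu, hw]
      ring_nf
      ring_nf at this
      linarith
    have hsa : Summable a :=
      Summable.of_nonneg_of_le ha0 haupw ((hsx.add hsy).div_const 2)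
    refine ⟨hsa, ?_⟩
    set M := Real.exp (Atil * t) / Real.sqrt (2 * π * t) with hM
    have hM0 : 0 ≤ M := by positivity
    apply Summable.tsum_le_of_sum_le hsa
    intro s
    have hux : ∑ k ∈ s, u k ≤ M := (hsx.sum_le_tsum s (fun k _ => hu0 k)).trans hbx
    have hwy : ∑ k ∈ s, w k ≤ M := (hsy.sum_le_tsum s (fun k _ => hw0 k)).trans hby
    have hcs := Finset.sum_mul_sq_le_sq_mul_sq s (fun k => Real.sqrt (u k))
      (fun k => Real.sqrt (w k))
    have hprod : ∀ k, Real.sqrt (u k) * Real.sqrt (w k) = a k := by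
      intro k
      rw [hu, hw, ha]
      rw [Real.sqrt_mul (Real.exp_pos _).le, Real.sqrt_mul (Real.exp_pos _).le,
        Real.sqrt_sq_eq_abs, Real.sqrt_sq_eq_abs]
      rw [show Real.sqrt (Real.exp (-(lam k*t))) * |Ψ k x| *
          (Real.sqrt (Real.exp (-(lam k*t))) * |Ψ k y|) =
          (Real.sqrt (Real.exp (-(lam k*t))) * Real.sqrt (Real.exp (-(lam k*t)))) *
            |Ψ k x| * |Ψ k y| by ring]
      rw [Real.mul_self_sqrt (Real.exp_pos _).le]
    have hsqq : ∀ k, (Real.sqrt (u k))^2 = u k := fun k => Real.sq_sqrt (hu0 k)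
    have hsqw : ∀ k, (Real.sqrt (w k))^2 = w k := fun k => Real.sq_sqrt (hw0 k)
    simp_rw [hprod, hsqq, hsqw] at hcs
    have hsq2 : (∑ k ∈ s, a k)^2 ≤ M^2 := by
      calc (∑ k ∈ s, a k)^2 ≤ (∑ k ∈ s, u k) * (∑ k ∈ s, w k) := hcs
        _ ≤ M * M := mul_le_mul hux hwy (Finset.sum_nonneg fun k _ => hw0 k) hM0
        _ = M^2 := (sq M).symm
    nlinarith [Finset.sum_nonneg (fun k (_ : k ∈ s) => ha0 k), hM0, hsq2]
  refine ⟨parti, ?_, ?_⟩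
  · -- (ii)
    intro φ hφ t ht x
    obtain ⟨h, hm, h0, hmem, hsq, hid⟩ :=
      exists_density P B hP hBm hB0 hBc hBinc Vt Atil hVc hVb t ht x
    have hcoef : ∀ k, (∫ y, h y * Ψ k y) =
        (fun k => Real.exp (-(lam k * t)) * Ψ k x) k := fun k =>
      ((hid (Ψ k) (hΨc k).aestronglyMeasurable).symm.trans (heigen k t ht x))
    have hHS := hilbert_expansion Ψ hΨc horth hcomplete h hmem
      (fun k => Real.exp (-(lam k * t)) * Ψ k x) hcoef
    have hpt : ∀ y : ℝ, Summable fun k =>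
        (fun k => Real.exp (-(lam k * t)) * Ψ k x) k * Ψ k y := by
      intro y
      apply Summable.of_abs
      have habs : (fun k => |Real.exp (-(lam k * t)) * Ψ k x * Ψ k y|) =
          fun k => Real.exp (-(lam k * t)) * |Ψ k x| * |Ψ k y| := by
        funext k
        rw [abs_mul, abs_mul, Real.abs_exp]
      rw [habs]
      exact (parti t ht x y).1
    have hae : (fun y => ∑' k, Real.exp (-(lam k * t)) * Ψ k x * Ψ k y) =ᵐ[volume] h :=
      tsum_ae_eq Ψ hΨc horth h hmem (fun k => Real.exp (-(lam k * t)) * Ψ k x) hHS hpt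
    rw [hid φ hφ.aestronglyMeasurable]
    apply integral_congr_ae
    filter_upwards [hae] with y hy
    rw [hy]
  · -- (iii)
    apply continuousOn_of_forall_continuousAt
    intro q0 hq0
    have ht0 : (0:ℝ) < q0.1 := hq0
    set t0 : ℝ := q0.1 with ht0def
    set s : ℝ := t0/4 with hs
    have hs0 : 0 < s := by positivity
    set Ms : ℝ := Real.exp (Atil*s) / Real.sqrt (2*π*s) with hMs
    have hMs0 : 0 ≤ Ms := by positivity
    set U : Set (ℝ × ℝ × ℝ) := {q | t0/2 < q.1 ∧ q.1 < 2*t0} with hU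
    have hUopen : IsOpen U :=
      (isOpen_lt continuous_const continuous_fst).inter
        (isOpen_lt continuous_fst continuous_const)
    have hq0U : q0 ∈ U := by
      constructor
      · simpa using by linarith
      · simpa using by linarith
    set u : ℕ → ℝ := fun k => (Real.exp (-(lam k * (t0/4))) + Real.exp (-(lam k * (2*t0)))) * Ms
      with hu
    have hus : Summable u :=
      ((hsumm (t0/4) (by positivity)).add (hsumm (2*t0) (by positivity))).mul_right Ms
    have hbound : ∀ k, ∀ q ∈ U,
        ‖Real.exp (-(lam k * q.1)) * Ψ k q.2.1 * Ψ k q.2.2‖ ≤ u k := by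
      intro k q hqU
      obtain ⟨hq1, hq2⟩ := hqU
      have hr1 : t0/4 ≤ q.1 - s := by rw [hs]; linarith
      have hr2 : q.1 - s ≤ 2*t0 := by rw [hs]; linarith
      have hsplit : Real.exp (-(lam k * q.1)) =
          Real.exp (-(lam k * (q.1 - s))) * Real.exp (-(lam k * s)) := by
        rw [← Real.exp_add]
        congr 1
        ring
      have hterm : Real.exp (-(lam k * s)) * |Ψ k q.2.1| * |Ψ k q.2.2| ≤ Ms := by
        apply aux_abs_le (Real.exp_pos _).le hMs0
        · exact (Summable.le_tsum (hdiag s hs0 q.2.1).1 k fun j _ => by positivity).trans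
            (hdiag s hs0 q.2.1).2
        · exact (Summable.le_tsum (hdiag s hs0 q.2.2).1 k fun j _ => by positivity).trans
            (hdiag s hs0 q.2.2).2
      have hexpmax : Real.exp (-(lam k * (q.1 - s))) ≤
          Real.exp (-(lam k * (t0/4))) + Real.exp (-(lam k * (2*t0))) := by
        rcases le_or_gt 0 (lam k) with hl | hl
        · have : -(lam k * (q.1 - s)) ≤ -(lam k * (t0/4)) := by nlinarith
          exact (Real.exp_le_exp.2 this).trans (le_add_of_nonneg_right (Real.exp_pos _).le)
        · have : -(lam k * (q.1 - s)) ≤ -(lam k * (2*t0)) := by nlinarith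
          exact (Real.exp_le_exp.2 this).trans (le_add_of_nonneg_left (Real.exp_pos _).le)
      calc ‖Real.exp (-(lam k * q.1)) * Ψ k q.2.1 * Ψ k q.2.2‖
          = Real.exp (-(lam k * q.1)) * |Ψ k q.2.1| * |Ψ k q.2.2| := by
            rw [Real.norm_eq_abs, abs_mul, abs_mul, Real.abs_exp]
        _ = Real.exp (-(lam k * (q.1 - s))) *
              (Real.exp (-(lam k * s)) * |Ψ k q.2.1| * |Ψ k q.2.2|) := by
            rw [hsplit]; ring
        _ ≤ (Real.exp (-(lam k * (t0/4))) + Real.exp (-(lam k * (2*t0)))) * Ms :=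
            mul_le_mul hexpmax hterm (by positivity) (by positivity)
        _ = u k := rfl
    have hcontU : ContinuousOn
        (fun q : ℝ × ℝ × ℝ => ∑' k, Real.exp (-(lam k * q.1)) * Ψ k q.2.1 * Ψ k q.2.2) U := by
      apply continuousOn_tsum (u := u) ?_ hus (fun k q hq => hbound k q hq)
      intro k
      apply Continuous.continuousOn
      exact (((continuous_const.mul continuous_fst).neg.rexp.mul
        ((hΨc k).comp (continuous_fst.comp continuous_snd))).mul
        ((hΨc k).comp (continuous_snd.comp continuous_snd)))
    exact hcontU.continuousAt (hUopen.mem_nhds hq0U)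
end

section
/- Let Ṽ : ℝ → ℝ be continuous with Ṽ(x) ≤ Ã for all x. Let (Ψ_k)_{k≥0} be C² functions with ∫ Ψ_k² dx = 1 satisfying ½Ψ_k″ + Ṽ Ψ_k = −λ_k Ψ_k, where (λ_k) is nondecreasing and ∑_{k≥0} e^{−λ_k t}(1 + λ_k²) < ∞ for every t > 0; assume the bounds |Ψ_k(x)| ≤ (e/π)^{1/4}(λ_k + Ã)^{1/4} for all k, x, and that there exist x* ∈ ℝ and constants A₁, A₂ ≥ 0 with |Ψ_k′(x*)| ≤ A₁ + A₂ λ_k for all k. Then p̃(t, x, y) := ∑_{k≥0} e^{−λ_k t} Ψ_k(x) Ψ_k(y) converges absolutely and uniformly on compact subsets of (0, ∞) × ℝ², p̃ is differentiable in t and twice continuously differentiable in y, with ∂_t p̃(t,x,y) = ∑_k (−λ_k) e^{−λ_k t} Ψ_k(x)Ψ_k(y) and ∂²_y p̃(t,x,y) = ∑_k e^{−λ_k t} Ψ_k(x)Ψ_k″(y), and p̃ satisfies the heat equation ∂_t p̃(t, x, y) = ½ ∂²_y p̃(t, x, y) + Ṽ(y) p̃(t, x, y) on (0, ∞) × ℝ².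 -/
open Real Filter

lemma aux_rpow_le (r : ℝ) : r ^ ((1:ℝ)/4) ≤ 1 + |r| := by
  have h1 : r ^ ((1:ℝ)/4) ≤ |r| ^ ((1:ℝ)/4) :=
    (le_abs_self _).trans (Real.abs_rpow_le_abs_rpow r _)
  rcases le_total |r| 1 with h | h
  · have := Real.rpow_le_one (abs_nonneg r) h (by norm_num : (0:ℝ) ≤ 1/4)
    linarith [abs_nonneg r]
  · have h2 : |r| ^ ((1:ℝ)/4) ≤ |r| ^ ((1:ℝ)) :=
      Real.rpow_le_rpow_of_exponent_le h (by norm_num)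
    rw [Real.rpow_one] at h2
    linarith

lemma aux_exp_interval (l a b τ : ℝ) (h1 : a ≤ τ) (h2 : τ ≤ b) :
    Real.exp (-(l*τ)) ≤ Real.exp (-(l*a)) + Real.exp (-(l*b)) := by
  rcases le_total 0 l with hl | hl
  · have : Real.exp (-(l*τ)) ≤ Real.exp (-(l*a)) := by
      apply Real.exp_le_exp.2; nlinarith
    linarith [Real.exp_pos (-(l*b))]
  · have : Real.exp (-(l*τ)) ≤ Real.exp (-(l*b)) := by
      apply Real.exp_le_exp.2; nlinarith
    linarith [Real.exp_pos (-(l*a))]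

lemma aux_summable {lam : ℕ → ℝ}
    (hsumm : ∀ t : ℝ, 0 < t →
      Summable fun k : ℕ => Real.exp (-(lam k * t)) * (1 + (lam k) ^ 2))
    (m : ℕ) : ∀ s : ℝ, 0 < s →
    Summable fun k : ℕ => Real.exp (-(lam k * s)) * (1 + (lam k) ^ 2) ^ m := by
  induction m with
  | zero =>
    intro s hs
    apply Summable.of_nonneg_of_le (fun k => by positivity) _ (hsumm s hs)
    intro k
    have h1 : (1:ℝ) ≤ 1 + lam k ^ 2 := by nlinarith [sq_nonneg (lam k)]
    nlinarith [Real.exp_pos (-(lam k * s))]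
  | succ m ih =>
    intro s hs
    have hs2 : 0 < s/2 := by linarith
    have hb : BddAbove (Set.range fun k => Real.exp (-(lam k * (s/2))) * (1 + lam k ^ 2)) :=
      ((hsumm (s/2) hs2).tendsto_atTop_zero).bddAbove_range
    obtain ⟨D, hD⟩ := hb
    have hD' : ∀ k, Real.exp (-(lam k * (s/2))) * (1 + lam k ^ 2) ≤ D := by
      intro k; exact hD (Set.mem_range_self k)
    refine Summable.of_nonneg_of_le (fun k => by positivity) (fun k => ?_)
      ((ih (s/2) hs2).mul_left D)
    have key : Real.exp (-(lam k * s)) = Real.exp (-(lam k * (s/2))) * Real.exp (-(lam k * (s/2))) := by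
      rw [← Real.exp_add]; ring_nf
    rw [key]
    have h1 : (0:ℝ) < 1 + lam k ^ 2 := by nlinarith [sq_nonneg (lam k)]
    have h2 := hD' k
    have h3 : (0:ℝ) ≤ (1 + lam k ^ 2) ^ m := by positivity
    have h4 := Real.exp_pos (-(lam k * (s/2)))
    calc Real.exp (-(lam k * (s/2))) * Real.exp (-(lam k * (s/2))) * (1 + lam k ^ 2) ^ (m+1)
        = (Real.exp (-(lam k * (s/2))) * (1 + lam k ^ 2)) *
            (Real.exp (-(lam k * (s/2))) * (1 + lam k ^ 2) ^ m) := by ring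
      _ ≤ D * (Real.exp (-(lam k * (s/2))) * (1 + lam k ^ 2) ^ m) := by
          apply mul_le_mul_of_nonneg_right h2 (by positivity)

lemma aux_key {F G : ℕ → ℝ → ℝ} {u : ℕ → ℝ} {s : Set ℝ} (hs : IsOpen s)
    (hu : Summable u)
    (hF : ∀ k, ∀ y ∈ s, HasDerivAt (F k) (G k y) y)
    (hG : ∀ k, ∀ y ∈ s, ‖G k y‖ ≤ u k)
    (hsum : ∀ y ∈ s, Summable fun k => F k y) :
    ∀ y ∈ s, HasDerivAt (fun y => ∑' k, F k y) (∑' k, G k y) y := by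
  intro y hy
  refine hasDerivAt_of_tendstoUniformlyOn (f := fun n x => ∑ k ∈ Finset.range n, F k x)
    (f' := fun n x => ∑ k ∈ Finset.range n, G k x) hs
    (tendstoUniformlyOn_tsum_nat hu (fun n x hx => hG n x hx)) ?_ ?_ hy
  · filter_upwards with n x hx
    exact HasDerivAt.fun_sum fun k _ => hF k x hx
  · intro x hx
    exact (hsum x hx).hasSum.tendsto_sum_nat


set_option maxHeartbeats 1600000 in
/-- Appendix A: the eigenfunction expansion
`p̃(t,x,y) = ∑ e^{-λ_k t}Ψ_k(x)Ψ_k(y)` converges uniformly (and absolutely) on compact subsets of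
`(0,∞) × ℝ²`, is differentiable in `t` and twice continuously differentiable in `y`, with the term
by term derivatives, and solves the heat equation `∂ₜp̃ = ½∂²_y p̃ + Ṽ(y)p̃`. -/
theorem density_solves_heat_equation
    (Vt : ℝ → ℝ) (Atil : ℝ) (hVc : Continuous Vt) (hVb : ∀ x, Vt x ≤ Atil)
    (Ψ : ℕ → ℝ → ℝ) (lam : ℕ → ℝ) (hmono : Monotone lam)
    (hΨ : ∀ k, ContDiff ℝ 2 (Ψ k))
    (hnorm : ∀ k, (∫ x : ℝ, (Ψ k x) ^ 2) = 1)
    (heigen : ∀ (k : ℕ) (x : ℝ),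
      (1 / 2) * deriv (deriv (Ψ k)) x + Vt x * Ψ k x = -lam k * Ψ k x)
    (hsumm : ∀ t : ℝ, 0 < t →
      Summable fun k : ℕ => Real.exp (-(lam k * t)) * (1 + (lam k) ^ 2))
    (hbound : ∀ (k : ℕ) (x : ℝ),
      |Ψ k x| ≤ (Real.exp 1 / Real.pi) ^ ((1 : ℝ) / 4) * (lam k + Atil) ^ ((1 : ℝ) / 4))
    (xstar A₁ A₂ : ℝ) (hA₁ : 0 ≤ A₁) (hA₂ : 0 ≤ A₂)
    (hderiv : ∀ k : ℕ, |deriv (Ψ k) xstar| ≤ A₁ + A₂ * lam k) :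
    -- absolute convergence ...
    (∀ t : ℝ, 0 < t → ∀ x y : ℝ,
      Summable fun k : ℕ => Real.exp (-(lam k * t)) * |Ψ k x| * |Ψ k y|) ∧
    -- ... and uniform convergence on compact subsets of (0,∞) × ℝ²
    (∀ K : Set (ℝ × ℝ × ℝ), IsCompact K → K ⊆ {q : ℝ × ℝ × ℝ | 0 < q.1} →
      TendstoUniformlyOn
        (fun n q => ∑ k ∈ Finset.range n,
          Real.exp (-(lam k * q.1)) * Ψ k q.2.1 * Ψ k q.2.2)
        (fun q => ∑' k, Real.exp (-(lam k * q.1)) * Ψ k q.2.1 * Ψ k q.2.2)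
        atTop K) ∧
    -- differentiability in t with term by term derivative
    (∀ t : ℝ, 0 < t → ∀ x y : ℝ,
      HasDerivAt (fun τ => ∑' k, Real.exp (-(lam k * τ)) * Ψ k x * Ψ k y)
        (∑' k, -lam k * Real.exp (-(lam k * t)) * Ψ k x * Ψ k y) t) ∧
    -- twice continuous differentiability in y with term by term second derivative
    (∀ t : ℝ, 0 < t → ∀ x : ℝ,
      ContDiff ℝ 2 (fun y => ∑' k, Real.exp (-(lam k * t)) * Ψ k x * Ψ k y)) ∧
    (∀ t : ℝ, 0 < t → ∀ x y : ℝ,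
      deriv (deriv (fun y' => ∑' k, Real.exp (-(lam k * t)) * Ψ k x * Ψ k y')) y =
        ∑' k, Real.exp (-(lam k * t)) * Ψ k x * deriv (deriv (Ψ k)) y) ∧
    -- the heat equation ∂ₜ p̃ = ½ ∂²_y p̃ + Ṽ(y) p̃
    (∀ t : ℝ, 0 < t → ∀ x y : ℝ,
      deriv (fun τ => ∑' k, Real.exp (-(lam k * τ)) * Ψ k x * Ψ k y) t =
        (1 / 2) * deriv (deriv (fun y' => ∑' k, Real.exp (-(lam k * t)) * Ψ k x * Ψ k y')) y +
          Vt y * ∑' k, Real.exp (-(lam k * t)) * Ψ k x * Ψ k y) := by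
    classical
  obtain ⟨c₀, hc₀, hB⟩ : ∃ c : ℝ, 0 ≤ c ∧ ∀ (k : ℕ) (x : ℝ), |Ψ k x| ≤ c * (1 + lam k ^ 2) := by
    have hCpos : (0:ℝ) ≤ (Real.exp 1 / Real.pi) ^ ((1:ℝ)/4) :=
      Real.rpow_nonneg (by positivity) _
    refine ⟨(Real.exp 1 / Real.pi) ^ ((1:ℝ)/4) * (2 + |Atil|),
      mul_nonneg hCpos (by positivity), ?_⟩
    intro k x
    have h1 := hbound k x
    have h2 : (lam k + Atil) ^ ((1:ℝ)/4) ≤ 1 + |lam k + Atil| := aux_rpow_le _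
    have h3 : |lam k + Atil| ≤ |lam k| + |Atil| := abs_add_le _ _
    have h4 : |lam k| ≤ 1 + lam k ^ 2 := by
      rcases abs_cases (lam k) with ⟨h, _⟩ | ⟨h, _⟩ <;> rw [h] <;> nlinarith [sq_nonneg (lam k)]
    have h5 : (lam k + Atil) ^ ((1:ℝ)/4) ≤ (2 + |Atil|) * (1 + lam k ^ 2) := by
      nlinarith [abs_nonneg Atil, sq_nonneg (lam k)]
    calc |Ψ k x| ≤ (Real.exp 1 / Real.pi) ^ ((1:ℝ)/4) * (lam k + Atil) ^ ((1:ℝ)/4) := h1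
      _ ≤ (Real.exp 1 / Real.pi) ^ ((1:ℝ)/4) * ((2 + |Atil|) * (1 + lam k ^ 2)) :=
          mul_le_mul_of_nonneg_left h5 hCpos
      _ = (Real.exp 1 / Real.pi) ^ ((1:ℝ)/4) * (2 + |Atil|) * (1 + lam k ^ 2) := by ring
  have hone : ∀ k : ℕ, (1:ℝ) ≤ 1 + lam k ^ 2 := fun k => by nlinarith [sq_nonneg (lam k)]
  have habsl : ∀ k : ℕ, |lam k| ≤ 1 + lam k ^ 2 := by
    intro k
    rcases abs_cases (lam k) with ⟨h, _⟩ | ⟨h, _⟩ <;> rw [h] <;> nlinarith [sq_nonneg (lam k)]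
  have hP2 : ∀ k : ℕ, (1 + lam k ^ 2) ≤ (1 + lam k ^ 2) ^ 2 := by
    intro k; nlinarith [sq_nonneg (lam k), sq_nonneg (lam k ^ 2)]
  -- second derivative formula
  have hD2 : ∀ (k : ℕ) (y : ℝ), deriv (deriv (Ψ k)) y = -2 * (lam k + Vt y) * Ψ k y := by
    intro k y
    have := heigen k y
    linarith
  -- differentiability facts
  have hdiff1 : ∀ k, Differentiable ℝ (Ψ k) := fun k => (hΨ k).differentiable (by norm_num)
  have hdiff2 : ∀ k, Differentiable ℝ (deriv (Ψ k)) := by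
    intro k
    have h2 : ContDiff ℝ (1 + 1) (Ψ k) := by
      rw [one_add_one_eq_two]; exact_mod_cast hΨ k
    exact (contDiff_succ_iff_deriv.mp h2).2.2.differentiable (by norm_num)
  have hcont2 : ∀ k, Continuous (deriv (deriv (Ψ k))) := by
    intro k
    have : deriv (deriv (Ψ k)) = fun y => -2 * (lam k + Vt y) * Ψ k y := funext (hD2 k)
    rw [this]
    exact ((continuous_const.mul (continuous_const.add hVc)).mul (hΨ k).continuous)
  -- bound on second derivative
  have hB2 : ∀ (k : ℕ) (y : ℝ),
      |deriv (deriv (Ψ k)) y| ≤ 2 * (|lam k| + |Vt y|) * (c₀ * (1 + lam k ^ 2)) := by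
    intro k y
    rw [hD2 k y]
    have h1 := hB k y
    have h2 : |(-2 : ℝ) * (lam k + Vt y) * Ψ k y| = 2 * |lam k + Vt y| * |Ψ k y| := by
      rw [abs_mul, abs_mul]; norm_num
    rw [h2]
    have h3 : |lam k + Vt y| ≤ |lam k| + |Vt y| := abs_add_le _ _
    nlinarith [abs_nonneg (Ψ k y), abs_nonneg (lam k), abs_nonneg (Vt y),
      abs_nonneg (lam k + Vt y), hone k, hc₀]
  -- local bound on second derivative, uniform on Icc (y₀-1) (y₀+1)
  have hB2' : ∀ y₀ : ℝ, ∃ E : ℝ, 0 ≤ E ∧ ∀ k : ℕ, ∀ y ∈ Set.Icc (y₀-1) (y₀+1),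
      |deriv (deriv (Ψ k)) y| ≤ E * (1 + lam k ^ 2) ^ 2 := by
    intro y₀
    obtain ⟨VJ, hVJ⟩ := (isCompact_Icc (a := y₀-1) (b := y₀+1)).exists_bound_of_continuousOn
      hVc.continuousOn
    set V₀ := max VJ 0 with hV₀def
    have hV₀ : 0 ≤ V₀ := le_max_right _ _
    refine ⟨2 * c₀ * (1 + V₀), by
      have : (0:ℝ) ≤ 1 + V₀ := by linarith
      exact mul_nonneg (mul_nonneg (by norm_num) hc₀) this, ?_⟩
    intro k y hy
    have h2 : |Vt y| ≤ V₀ := le_trans (by simpa using hVJ y hy) (le_max_left _ _)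
    have h3 := habsl k
    have h5 : |lam k| + |Vt y| ≤ (1 + V₀) * (1 + lam k ^ 2) := by
      nlinarith [mul_nonneg hV₀ (sq_nonneg (lam k))]
    calc |deriv (deriv (Ψ k)) y| ≤ 2 * (|lam k| + |Vt y|) * (c₀ * (1 + lam k ^ 2)) := hB2 k y
      _ ≤ 2 * ((1 + V₀) * (1 + lam k ^ 2)) * (c₀ * (1 + lam k ^ 2)) := by
          apply mul_le_mul_of_nonneg_right (by linarith)
            (mul_nonneg hc₀ (by nlinarith [sq_nonneg (lam k)]))
      _ = 2 * c₀ * (1 + V₀) * (1 + lam k ^ 2) ^ 2 := by ring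
  -- local bound on first derivative
  have hB1 : ∀ y₀ : ℝ, ∃ D : ℝ, 0 ≤ D ∧ ∀ k : ℕ, ∀ y ∈ Set.Icc (y₀-1) (y₀+1),
      |deriv (Ψ k) y| ≤ D * (1 + lam k ^ 2) ^ 2 := by
    intro y₀
    set J := Set.Icc (min xstar (y₀-1)) (max xstar (y₀+1)) with hJdef
    have hJx : xstar ∈ J := ⟨min_le_left _ _, le_max_left _ _⟩
    have hJy : ∀ y ∈ Set.Icc (y₀-1) (y₀+1), y ∈ J := fun y hy =>
      ⟨le_trans (min_le_right _ _) hy.1, le_trans hy.2 (le_max_right _ _)⟩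
    obtain ⟨VJ, hVJ⟩ := (isCompact_Icc (a := min xstar (y₀-1))
      (b := max xstar (y₀+1))).exists_bound_of_continuousOn hVc.continuousOn
    set V₀ := max VJ 0 with hV₀def
    have hV₀ : 0 ≤ V₀ := le_max_right _ _
    set L := |xstar| + |y₀| + 1 with hLdef
    have hL : 0 ≤ L := by positivity
    have hD0 : 0 ≤ 2 * c₀ * L * (1 + V₀) :=
      mul_nonneg (mul_nonneg (mul_nonneg (by norm_num) hc₀) hL) (by linarith)
    refine ⟨A₁ + A₂ + 2 * c₀ * L * (1 + V₀), by linarith, ?_⟩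
    intro k y hy
    have h4 := hone k
    have hMVT : ‖deriv (Ψ k) y - deriv (Ψ k) xstar‖ ≤
        (2 * ((1 + lam k ^ 2) + V₀) * (c₀ * (1 + lam k ^ 2))) * ‖y - xstar‖ := by
      apply Convex.norm_image_sub_le_of_norm_hasDerivWithin_le
        (f' := fun z => deriv (deriv (Ψ k)) z)
        (fun z _ => ((hdiff2 k z).hasDerivAt).hasDerivWithinAt)
        _ (convex_Icc _ _) hJx (hJy y hy)
      intro z hz
      have h2 : |Vt z| ≤ V₀ := le_trans (by simpa using hVJ z hz) (le_max_left _ _)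
      have h3 := habsl k
      rw [Real.norm_eq_abs]
      calc |(fun z => deriv (deriv (Ψ k)) z) z|
          = |deriv (deriv (Ψ k)) z| := rfl
        _ ≤ 2 * (|lam k| + |Vt z|) * (c₀ * (1 + lam k ^ 2)) := hB2 k z
        _ ≤ 2 * ((1 + lam k ^ 2) + V₀) * (c₀ * (1 + lam k ^ 2)) := by
            apply mul_le_mul_of_nonneg_right (by linarith)
              (mul_nonneg hc₀ (by linarith))
    have hyx : ‖y - xstar‖ ≤ L := by
      rw [Real.norm_eq_abs, hLdef]
      have h1 : |y| ≤ |y₀| + 1 := by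
        rcases hy with ⟨h2, h3⟩
        rcases abs_cases y with ⟨h, _⟩ | ⟨h, _⟩ <;> rcases abs_cases y₀ with ⟨h', _⟩ | ⟨h', _⟩ <;>
          linarith
      calc |y - xstar| ≤ |y| + |xstar| := abs_sub _ _
        _ ≤ |xstar| + |y₀| + 1 := by linarith
    rw [Real.norm_eq_abs] at hMVT
    have hst := hderiv k
    have h6 : (0:ℝ) ≤ 2 * ((1 + lam k ^ 2) + V₀) * (c₀ * (1 + lam k ^ 2)) :=
      mul_nonneg (by linarith) (mul_nonneg hc₀ (by linarith))
    have key : |deriv (Ψ k) y| ≤ (A₁ + A₂ * lam k) +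
        (2 * ((1 + lam k ^ 2) + V₀) * (c₀ * (1 + lam k ^ 2))) * L := by
      have h5 : |deriv (Ψ k) y| ≤ |deriv (Ψ k) xstar| + |deriv (Ψ k) y - deriv (Ψ k) xstar| := by
        have := abs_add_le (deriv (Ψ k) xstar) (deriv (Ψ k) y - deriv (Ψ k) xstar)
        simpa using this
      nlinarith [mul_le_mul_of_nonneg_left hyx h6, abs_nonneg (y - xstar)]
    have h8 := hP2 k
    have h7 : lam k ≤ (1 + lam k ^ 2) ^ 2 :=
      le_trans (by nlinarith [sq_nonneg (lam k - 1)]) h8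
    have e1 : A₁ ≤ A₁ * (1 + lam k ^ 2) ^ 2 := by nlinarith [mul_nonneg hA₁ (by linarith : (0:ℝ) ≤ (1 + lam k ^ 2) ^ 2 - 1)]
    have e2 : A₂ * lam k ≤ A₂ * (1 + lam k ^ 2) ^ 2 := mul_le_mul_of_nonneg_left h7 hA₂
    have hPP : 0 ≤ (1 + lam k ^ 2) * ((1 + lam k ^ 2) - 1) :=
      mul_nonneg (by linarith) (by linarith)
    have e3 : (2 * ((1 + lam k ^ 2) + V₀) * (c₀ * (1 + lam k ^ 2))) * L ≤
        2 * c₀ * L * (1 + V₀) * (1 + lam k ^ 2) ^ 2 := by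
      nlinarith [mul_nonneg (mul_nonneg (mul_nonneg hc₀ hL) hV₀) hPP]
    calc |deriv (Ψ k) y| ≤ (A₁ + A₂ * lam k) +
        (2 * ((1 + lam k ^ 2) + V₀) * (c₀ * (1 + lam k ^ 2))) * L := key
      _ ≤ A₁ * (1 + lam k ^ 2) ^ 2 + A₂ * (1 + lam k ^ 2) ^ 2 +
          2 * c₀ * L * (1 + V₀) * (1 + lam k ^ 2) ^ 2 := by linarith
      _ = (A₁ + A₂ + 2 * c₀ * L * (1 + V₀)) * (1 + lam k ^ 2) ^ 2 := by ring
  -- Part 1: absolute convergence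
  have part1 : ∀ t : ℝ, 0 < t → ∀ x y : ℝ,
      Summable fun k : ℕ => Real.exp (-(lam k * t)) * |Ψ k x| * |Ψ k y| := by
    intro t ht x y
    refine Summable.of_nonneg_of_le (fun k => by positivity) (fun k => ?_)
      (((aux_summable hsumm 2) t ht).mul_left (c₀ ^ 2))
    have b1 := hB k x
    have b2 := hB k y
    have he := Real.exp_pos (-(lam k * t))
    calc Real.exp (-(lam k * t)) * |Ψ k x| * |Ψ k y|
        = Real.exp (-(lam k * t)) * (|Ψ k x| * |Ψ k y|) := by ring
      _ ≤ Real.exp (-(lam k * t)) * ((c₀ * (1 + lam k ^ 2)) * (c₀ * (1 + lam k ^ 2))) := by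
          apply mul_le_mul_of_nonneg_left _ he.le
          exact mul_le_mul b1 b2 (abs_nonneg _) (mul_nonneg hc₀ (by positivity))
      _ = c₀ ^ 2 * (Real.exp (-(lam k * t)) * (1 + lam k ^ 2) ^ 2) := by ring
  -- summability of the non-absolute series
  have hsum0 : ∀ t : ℝ, 0 < t → ∀ x y : ℝ,
      Summable fun k : ℕ => Real.exp (-(lam k * t)) * Ψ k x * Ψ k y := by
    intro t ht x y
    apply Summable.of_abs
    refine (part1 t ht x y).congr (fun k => ?_)
    rw [abs_mul, abs_mul, Real.abs_exp]
  have hax : ∀ (t x : ℝ) (k : ℕ), |Real.exp (-(lam k * t)) * Ψ k x| ≤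
      Real.exp (-(lam k * t)) * (c₀ * (1 + lam k ^ 2)) := by
    intro t x k
    rw [abs_mul, Real.abs_exp]
    exact mul_le_mul_of_nonneg_left (hB k x) (Real.exp_pos _).le
  -- Part 2: uniform convergence on compacts
  have part2 : ∀ K : Set (ℝ × ℝ × ℝ), IsCompact K → K ⊆ {q : ℝ × ℝ × ℝ | 0 < q.1} →
      TendstoUniformlyOn
        (fun n q => ∑ k ∈ Finset.range n,
          Real.exp (-(lam k * q.1)) * Ψ k q.2.1 * Ψ k q.2.2)
        (fun q => ∑' k, Real.exp (-(lam k * q.1)) * Ψ k q.2.1 * Ψ k q.2.2)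
        atTop K := by
    intro K hK hKsub
    rcases K.eq_empty_or_nonempty with rfl | hne
    · exact tendstoUniformlyOn_empty
    obtain ⟨qe, hqeK, hmin⟩ := hK.exists_isMinOn hne continuous_fst.continuousOn
    obtain ⟨qT, hqTK, hmax⟩ := hK.exists_isMaxOn hne continuous_fst.continuousOn
    have he : 0 < qe.1 := hKsub hqeK
    have hT : 0 < qT.1 := hKsub hqTK
    apply tendstoUniformlyOn_tsum_nat
      (u := fun k => c₀ ^ 2 * (Real.exp (-(lam k * qe.1)) * (1 + lam k ^ 2) ^ 2 +
        Real.exp (-(lam k * qT.1)) * (1 + lam k ^ 2) ^ 2))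
      ((((aux_summable hsumm 2) qe.1 he).add ((aux_summable hsumm 2) qT.1 hT)).mul_left (c₀^2))
    intro n q hq
    rw [Real.norm_eq_abs, abs_mul, abs_mul, Real.abs_exp]
    have hexp := aux_exp_interval (lam n) qe.1 qT.1 q.1 (hmin hq) (hmax hq)
    have b1 := hB n q.2.1
    have b2 := hB n q.2.2
    have m1 : |Ψ n q.2.1| * |Ψ n q.2.2| ≤ (c₀ * (1 + lam n ^ 2)) * (c₀ * (1 + lam n ^ 2)) :=
      mul_le_mul b1 b2 (abs_nonneg _) (mul_nonneg hc₀ (by positivity))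
    calc Real.exp (-(lam n * q.1)) * |Ψ n q.2.1| * |Ψ n q.2.2|
        = Real.exp (-(lam n * q.1)) * (|Ψ n q.2.1| * |Ψ n q.2.2|) := by ring
      _ ≤ (Real.exp (-(lam n * qe.1)) + Real.exp (-(lam n * qT.1))) *
            ((c₀ * (1 + lam n ^ 2)) * (c₀ * (1 + lam n ^ 2))) :=
          mul_le_mul hexp m1 (by positivity)
            (by positivity)
      _ = c₀ ^ 2 * (Real.exp (-(lam n * qe.1)) * (1 + lam n ^ 2) ^ 2 +
            Real.exp (-(lam n * qT.1)) * (1 + lam n ^ 2) ^ 2) := by ring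
  -- Part 3: differentiability in t
  have part3 : ∀ t : ℝ, 0 < t → ∀ x y : ℝ,
      HasDerivAt (fun τ => ∑' k, Real.exp (-(lam k * τ)) * Ψ k x * Ψ k y)
        (∑' k, -lam k * Real.exp (-(lam k * t)) * Ψ k x * Ψ k y) t := by
    intro t ht x y
    have hmem : t ∈ Set.Ioo (t/2) (2*t) := ⟨by linarith, by linarith⟩
    refine aux_key (F := fun k τ => Real.exp (-(lam k * τ)) * Ψ k x * Ψ k y)
      (G := fun k τ => -lam k * Real.exp (-(lam k * τ)) * Ψ k x * Ψ k y)
      (u := fun k => c₀ ^ 2 * (Real.exp (-(lam k * (t/2))) * (1 + lam k ^ 2) ^ 3 +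
        Real.exp (-(lam k * (2*t))) * (1 + lam k ^ 2) ^ 3))
      isOpen_Ioo ?_ ?_ ?_ ?_ t hmem
    · exact (((aux_summable hsumm 3) (t/2) (by linarith)).add
        ((aux_summable hsumm 3) (2*t) (by linarith))).mul_left _
    · intro k τ _
      have h1 : HasDerivAt (fun τ : ℝ => -(lam k * τ)) (-lam k) τ := by
        simpa using ((hasDerivAt_id τ).const_mul (lam k)).fun_neg
      have h3 : HasDerivAt (fun τ : ℝ => Real.exp (-(lam k * τ)))
          (-lam k * Real.exp (-(lam k * τ))) τ := by
        simpa [mul_comm] using h1.exp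
      have h4 := (h3.mul_const (Ψ k x)).mul_const (Ψ k y)
      convert h4 using 1
    · intro k τ hτ
      rw [Real.norm_eq_abs, abs_mul, abs_mul, abs_mul, abs_neg, Real.abs_exp]
      have hexp := aux_exp_interval (lam k) (t/2) (2*t) τ hτ.1.le hτ.2.le
      have b1 := hB k x
      have b2 := hB k y
      have hl := habsl k
      have e0 : (0:ℝ) ≤ Real.exp (-(lam k * τ)) := (Real.exp_pos _).le
      have m1 : |Ψ k x| * |Ψ k y| ≤ (c₀ * (1 + lam k ^ 2)) * (c₀ * (1 + lam k ^ 2)) :=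
        mul_le_mul b1 b2 (abs_nonneg _) (mul_nonneg hc₀ (by positivity))
      have m2 : |lam k| * Real.exp (-(lam k * τ)) ≤
          (1 + lam k ^ 2) * (Real.exp (-(lam k * (t/2))) + Real.exp (-(lam k * (2*t)))) :=
        mul_le_mul hl hexp e0 (by positivity)
      calc |lam k| * Real.exp (-(lam k * τ)) * |Ψ k x| * |Ψ k y|
          = (|lam k| * Real.exp (-(lam k * τ))) * (|Ψ k x| * |Ψ k y|) := by ring
        _ ≤ ((1 + lam k ^ 2) * (Real.exp (-(lam k * (t/2))) + Real.exp (-(lam k * (2*t))))) *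
              ((c₀ * (1 + lam k ^ 2)) * (c₀ * (1 + lam k ^ 2))) :=
            mul_le_mul m2 m1 (mul_nonneg (abs_nonneg _) (abs_nonneg _)) (by positivity)
        _ = c₀ ^ 2 * (Real.exp (-(lam k * (t/2))) * (1 + lam k ^ 2) ^ 3 +
              Real.exp (-(lam k * (2*t))) * (1 + lam k ^ 2) ^ 3) := by ring
    · intro τ hτ
      exact hsum0 τ (by have := hτ.1; linarith) x y
  -- smoothness in y: combined statement
  have Hy : ∀ t : ℝ, 0 < t → ∀ x : ℝ,
      (∀ y₀ : ℝ, HasDerivAt (fun y => ∑' k, Real.exp (-(lam k * t)) * Ψ k x * Ψ k y)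
          (∑' k, Real.exp (-(lam k * t)) * Ψ k x * deriv (Ψ k) y₀) y₀) ∧
      (∀ y₀ : ℝ, HasDerivAt (fun y => ∑' k, Real.exp (-(lam k * t)) * Ψ k x * deriv (Ψ k) y)
          (∑' k, Real.exp (-(lam k * t)) * Ψ k x * deriv (deriv (Ψ k)) y₀) y₀) ∧
      Continuous (fun y => ∑' k, Real.exp (-(lam k * t)) * Ψ k x * deriv (deriv (Ψ k)) y) := by
    intro t ht x
    refine ⟨?_, ?_, ?_⟩
    · -- first derivative in y
      intro y₀
      obtain ⟨D, hD0, hDb⟩ := hB1 y₀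
      refine aux_key (F := fun k y => Real.exp (-(lam k * t)) * Ψ k x * Ψ k y)
        (G := fun k y => Real.exp (-(lam k * t)) * Ψ k x * deriv (Ψ k) y)
        (u := fun k => (c₀ * D) * (Real.exp (-(lam k * t)) * (1 + lam k ^ 2) ^ 3))
        (s := Set.Ioo (y₀-1) (y₀+1)) isOpen_Ioo
        (((aux_summable hsumm 3) t ht).mul_left _) ?_ ?_ ?_ y₀ ⟨by linarith, by linarith⟩
      · intro k y _
        exact HasDerivAt.const_mul _ ((hdiff1 k y).hasDerivAt)
      · intro k y hy
        have hIcc : y ∈ Set.Icc (y₀-1) (y₀+1) := ⟨hy.1.le, hy.2.le⟩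
        rw [Real.norm_eq_abs, abs_mul]
        calc |Real.exp (-(lam k * t)) * Ψ k x| * |deriv (Ψ k) y|
            ≤ (Real.exp (-(lam k * t)) * (c₀ * (1 + lam k ^ 2))) * (D * (1 + lam k ^ 2) ^ 2) :=
              mul_le_mul (hax t x k) (hDb k y hIcc) (abs_nonneg _)
                (mul_nonneg (Real.exp_pos _).le (mul_nonneg hc₀ (by positivity)))
          _ = (c₀ * D) * (Real.exp (-(lam k * t)) * (1 + lam k ^ 2) ^ 3) := by ring
      · intro y _
        exact hsum0 t ht x y
    · -- second derivative in y
      intro y₀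
      obtain ⟨D, hD0, hDb⟩ := hB1 y₀
      obtain ⟨E, hE0, hEb⟩ := hB2' y₀
      refine aux_key (F := fun k y => Real.exp (-(lam k * t)) * Ψ k x * deriv (Ψ k) y)
        (G := fun k y => Real.exp (-(lam k * t)) * Ψ k x * deriv (deriv (Ψ k)) y)
        (u := fun k => (c₀ * E) * (Real.exp (-(lam k * t)) * (1 + lam k ^ 2) ^ 3))
        (s := Set.Ioo (y₀-1) (y₀+1)) isOpen_Ioo
        (((aux_summable hsumm 3) t ht).mul_left _) ?_ ?_ ?_ y₀ ⟨by linarith, by linarith⟩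
      · intro k y _
        exact HasDerivAt.const_mul _ ((hdiff2 k y).hasDerivAt)
      · intro k y hy
        have hIcc : y ∈ Set.Icc (y₀-1) (y₀+1) := ⟨hy.1.le, hy.2.le⟩
        rw [Real.norm_eq_abs, abs_mul]
        calc |Real.exp (-(lam k * t)) * Ψ k x| * |deriv (deriv (Ψ k)) y|
            ≤ (Real.exp (-(lam k * t)) * (c₀ * (1 + lam k ^ 2))) * (E * (1 + lam k ^ 2) ^ 2) :=
              mul_le_mul (hax t x k) (hEb k y hIcc) (abs_nonneg _)
                (mul_nonneg (Real.exp_pos _).le (mul_nonneg hc₀ (by positivity)))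
          _ = (c₀ * E) * (Real.exp (-(lam k * t)) * (1 + lam k ^ 2) ^ 3) := by ring
      · intro y hy
        have hIcc : y ∈ Set.Icc (y₀-1) (y₀+1) := ⟨hy.1.le, hy.2.le⟩
        apply Summable.of_abs
        refine Summable.of_nonneg_of_le (fun k => abs_nonneg _) (fun k => ?_)
          (((aux_summable hsumm 3) t ht).mul_left (c₀ * D))
        rw [abs_mul]
        calc |Real.exp (-(lam k * t)) * Ψ k x| * |deriv (Ψ k) y|
            ≤ (Real.exp (-(lam k * t)) * (c₀ * (1 + lam k ^ 2))) * (D * (1 + lam k ^ 2) ^ 2) :=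
              mul_le_mul (hax t x k) (hDb k y hIcc) (abs_nonneg _)
                (mul_nonneg (Real.exp_pos _).le (mul_nonneg hc₀ (by positivity)))
          _ = (c₀ * D) * (Real.exp (-(lam k * t)) * (1 + lam k ^ 2) ^ 3) := by ring
    · -- continuity of the second-derivative series
      rw [continuous_iff_continuousAt]
      intro y₀
      obtain ⟨E, hE0, hEb⟩ := hB2' y₀
      have hb : ∀ (k : ℕ) (y : ℝ), y ∈ Set.Ioo (y₀-1) (y₀+1) →
          ‖Real.exp (-(lam k * t)) * Ψ k x * deriv (deriv (Ψ k)) y‖ ≤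
            (c₀ * E) * (Real.exp (-(lam k * t)) * (1 + lam k ^ 2) ^ 3) := by
        intro k y hy
        have hIcc : y ∈ Set.Icc (y₀-1) (y₀+1) := ⟨hy.1.le, hy.2.le⟩
        rw [Real.norm_eq_abs, abs_mul]
        calc |Real.exp (-(lam k * t)) * Ψ k x| * |deriv (deriv (Ψ k)) y|
            ≤ (Real.exp (-(lam k * t)) * (c₀ * (1 + lam k ^ 2))) * (E * (1 + lam k ^ 2) ^ 2) :=
              mul_le_mul (hax t x k) (hEb k y hIcc) (abs_nonneg _)
                (mul_nonneg (Real.exp_pos _).le (mul_nonneg hc₀ (by positivity)))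
          _ = (c₀ * E) * (Real.exp (-(lam k * t)) * (1 + lam k ^ 2) ^ 3) := by ring
      have hTU := tendstoUniformlyOn_tsum_nat
        (((aux_summable hsumm 3) t ht).mul_left (c₀ * E)) hb
      refine (hTU.continuousOn ?_).continuousAt
        (Ioo_mem_nhds (by linarith) (by linarith))
      refine Filter.Frequently.of_forall fun n => ?_
      apply Continuous.continuousOn
      exact continuous_finset_sum _ fun k _ => continuous_const.mul (hcont2 k)
  -- Part 4: C² in y
  have part4 : ∀ t : ℝ, 0 < t → ∀ x : ℝ,
      ContDiff ℝ 2 (fun y => ∑' k, Real.exp (-(lam k * t)) * Ψ k x * Ψ k y) := by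
    intro t ht x
    obtain ⟨h1, h2, h3⟩ := Hy t ht x
    have e1 : deriv (fun y => ∑' k, Real.exp (-(lam k * t)) * Ψ k x * Ψ k y)
        = fun y => ∑' k, Real.exp (-(lam k * t)) * Ψ k x * deriv (Ψ k) y :=
      funext fun y => (h1 y).deriv
    have e2 : deriv (fun y => ∑' k, Real.exp (-(lam k * t)) * Ψ k x * deriv (Ψ k) y)
        = fun y => ∑' k, Real.exp (-(lam k * t)) * Ψ k x * deriv (deriv (Ψ k)) y :=
      funext fun y => (h2 y).deriv
    rw [← one_add_one_eq_two]
    apply contDiff_succ_iff_deriv.mpr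
    refine ⟨fun y => (h1 y).differentiableAt, by simp, ?_⟩
    rw [e1]
    apply contDiff_one_iff_deriv.mpr
    refine ⟨fun y => (h2 y).differentiableAt, ?_⟩
    rw [e2]
    exact h3
  -- Part 5: second derivative formula
  have part5 : ∀ t : ℝ, 0 < t → ∀ x y : ℝ,
      deriv (deriv (fun y' => ∑' k, Real.exp (-(lam k * t)) * Ψ k x * Ψ k y')) y =
        ∑' k, Real.exp (-(lam k * t)) * Ψ k x * deriv (deriv (Ψ k)) y := by
    intro t ht x y
    obtain ⟨h1, h2, _⟩ := Hy t ht x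
    have e1 : deriv (fun y' => ∑' k, Real.exp (-(lam k * t)) * Ψ k x * Ψ k y')
        = fun y' => ∑' k, Real.exp (-(lam k * t)) * Ψ k x * deriv (Ψ k) y' :=
      funext fun z => (h1 z).deriv
    rw [e1]
    exact (h2 y).deriv
  -- Part 6: the heat equation
  have part6 : ∀ t : ℝ, 0 < t → ∀ x y : ℝ,
      deriv (fun τ => ∑' k, Real.exp (-(lam k * τ)) * Ψ k x * Ψ k y) t =
        (1 / 2) * deriv (deriv (fun y' => ∑' k, Real.exp (-(lam k * t)) * Ψ k x * Ψ k y')) y +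
          Vt y * ∑' k, Real.exp (-(lam k * t)) * Ψ k x * Ψ k y := by
    intro t ht x y
    obtain ⟨E, hE0, hEb⟩ := hB2' y
    have hyIcc : y ∈ Set.Icc (y-1) (y+1) := ⟨by linarith, by linarith⟩
    have S1 : Summable fun k => Real.exp (-(lam k * t)) * Ψ k x * deriv (deriv (Ψ k)) y := by
      apply Summable.of_abs
      refine Summable.of_nonneg_of_le (fun k => abs_nonneg _) (fun k => ?_)
        (((aux_summable hsumm 3) t ht).mul_left (c₀ * E))
      rw [abs_mul]
      calc |Real.exp (-(lam k * t)) * Ψ k x| * |deriv (deriv (Ψ k)) y|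
          ≤ (Real.exp (-(lam k * t)) * (c₀ * (1 + lam k ^ 2))) * (E * (1 + lam k ^ 2) ^ 2) :=
            mul_le_mul (hax t x k) (hEb k y hyIcc) (abs_nonneg _)
              (mul_nonneg (Real.exp_pos _).le (mul_nonneg hc₀ (by positivity)))
        _ = (c₀ * E) * (Real.exp (-(lam k * t)) * (1 + lam k ^ 2) ^ 3) := by ring
    have S2 := hsum0 t ht x y
    rw [(part3 t ht x y).deriv, part5 t ht x y]
    have hterm : (fun k : ℕ => -lam k * Real.exp (-(lam k * t)) * Ψ k x * Ψ k y)
        = fun k => 1/2 * (Real.exp (-(lam k * t)) * Ψ k x * deriv (deriv (Ψ k)) y)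
          + Vt y * (Real.exp (-(lam k * t)) * Ψ k x * Ψ k y) := by
      funext k
      have h := heigen k y
      linear_combination (-(Real.exp (-(lam k * t)) * Ψ k x)) * h
    rw [hterm, Summable.tsum_add (S1.mul_left (1/2)) (S2.mul_left (Vt y)), tsum_mul_left, tsum_mul_left]
  exact ⟨part1, part2, part3, part4, part5, part6⟩
end
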